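/- arXiv:1612.07939 — 3 statements merged into one kernel-verified Lean document; each statement's English description precedes it below -/
import Mathlib

section
/- Let $(M,g)$ be a Riemannian manifold with boundary, let $\mu$ be a smooth function with $\mu|_{\partial M} = 0$ and $\partial_\nu \mu|_{\partial M} = 0$, and let $\tilde{g} = e^{2\mu} g$. If $f$ is a smooth function on $M$ and $\tilde{\partial}_n$ denotes differentiation along $\tilde{g}$-unit-speed geodesics normal to $\partial M$ with respect to $\tilde{g}$, then $\tilde{\partial}_n f|_{\partial M} = \partial_n f|_{\partial M}$ and $\tilde{\partial}_n^2 f|_{\partial M} = \partial_n^2 f|_{\partial M}$, where $\partial_n$ is the corresponding normal derivative with respect to $g$-boundary normal coordinates. -/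
open scoped BigOperators
open MeasureTheory

noncomputable section

/-- Points of `ℝⁿ` in coordinates. -/
abbrev Vec (n : ℕ) := Fin n → ℝ

variable {n : ℕ}

/-- Partial derivative `∂_j f` in coordinates. -/
def pd (f : Vec n → ℝ) (j : Fin n) (x : Vec n) : ℝ :=
  fderiv ℝ f x (Pi.single j 1)

/-- Inverse metric `g^{jk}`. -/
def ginv (g : Vec n → Matrix (Fin n) (Fin n) ℝ) (x : Vec n) : Matrix (Fin n) (Fin n) ℝ :=
  (g x)⁻¹

/-- Christoffel symbols `Γ^l_{jk}` of the Levi-Civita connection of `g` in coordinates. -/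
def christoffel (g : Vec n → Matrix (Fin n) (Fin n) ℝ) (l j k : Fin n) (x : Vec n) : ℝ :=
  (1/2) * ∑ m, ginv g x l m *
    (pd (fun y => g y k m) j x + pd (fun y => g y j m) k x - pd (fun y => g y j k) m x)

/-- Laplace-Beltrami operator (negative spectrum convention):
`Δ_g f = g^{jk} (∂_{jk} f - Γ^l_{jk} ∂_l f)`. -/
def laplaceBeltrami (g : Vec n → Matrix (Fin n) (Fin n) ℝ) (f : Vec n → ℝ) (x : Vec n) : ℝ :=
  ∑ j, ∑ k, ginv g x j k *
    (pd (pd f j) k x - ∑ l, christoffel g l j k x * pd f l x)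

/-- Riemann curvature tensor `R^l_{ijk}` in coordinates. -/
def riemann (g : Vec n → Matrix (Fin n) (Fin n) ℝ) (l i j k : Fin n) (x : Vec n) : ℝ :=
  pd (christoffel g l j k) i x - pd (christoffel g l i k) j x
    + ∑ m, christoffel g l i m x * christoffel g m j k x
    - ∑ m, christoffel g l j m x * christoffel g m i k x

/-- Scalar curvature `S_g = g^{jk} R_{jk}` where `R_{jk} = R^i_{ijk}`. -/
def scalarCurvature (g : Vec n → Matrix (Fin n) (Fin n) ℝ) (x : Vec n) : ℝ :=
  ∑ j, ∑ k, ginv g x j k * ∑ i, riemann g i i j k x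

/-- The conformal Laplacian `L_g u = -Δ_g u + ((n-2)/(4(n-1))) S_g u`. -/
def confLaplacian (g : Vec n → Matrix (Fin n) (Fin n) ℝ) (f : Vec n → ℝ) (x : Vec n) : ℝ :=
  - laplaceBeltrami g f x
    + (((n : ℝ) - 2) / (4 * ((n : ℝ) - 1))) * scalarCurvature g x * f x


lemma pd_contDiff {m : ℕ} (f : Vec m → ℝ) (hf : ContDiff ℝ (⊤ : ℕ∞) f) (j : Fin m) :
    ContDiff ℝ (⊤ : ℕ∞) (pd f j) := by
  have h1 : ContDiff ℝ (⊤ : ℕ∞) (fderiv ℝ f) := hf.fderiv_right (by simp)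
  exact (ContinuousLinearMap.apply ℝ ℝ (Pi.single j 1 : Vec m)).contDiff.comp h1

lemma fderiv_pi_apply {m : ℕ} (f : Vec m → ℝ) (x : Vec m) (v : Vec m) :
    fderiv ℝ f x v = ∑ l, v l * pd f l x := by
  have hv : (v : Vec m) = ∑ l, v l • (Pi.single l 1 : Vec m) := by
    funext j
    simp [Finset.sum_apply, Pi.single_apply]
  calc fderiv ℝ f x v = fderiv ℝ f x (∑ l, v l • (Pi.single l 1 : Vec m)) := by rw [← hv]
    _ = ∑ l, v l * pd f l x := by
        rw [map_sum]
        simp [pd, smul_eq_mul]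

lemma hasDerivAt_comp_curve {m : ℕ} (f : Vec m → ℝ) (hf : ContDiff ℝ (⊤ : ℕ∞) f)
    (η : ℝ → Vec m) (hη : ContDiff ℝ (⊤ : ℕ∞) η) (s : ℝ) :
    HasDerivAt (fun t => f (η t)) (∑ l, pd f l (η s) * deriv (fun r => η r l) s) s := by
  have hηc : ∀ l, Differentiable ℝ (fun t => η t l) := fun l =>
    (ContinuousLinearMap.proj l : Vec m →L[ℝ] ℝ).differentiable.comp
      (hη.differentiable (by simp))
  have hηd : HasDerivAt η (fun l => deriv (fun r => η r l) s) s :=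
    hasDerivAt_pi.2 fun l => ((hηc l) s).hasDerivAt
  have h := ((hf.differentiable (by simp) (η s)).hasFDerivAt).comp_hasDerivAt s hηd
  have hval : fderiv ℝ f (η s) (fun l => deriv (fun r => η r l) s)
      = ∑ l, pd f l (η s) * deriv (fun r => η r l) s := by
    rw [fderiv_pi_apply f (η s)]
    exact Finset.sum_congr rfl fun l _ => mul_comm _ _
  rwa [hval] at h

/-- comparison of the first two normal derivatives. In `g`-boundary normal
coordinates (total dimension `n+1`, boundary `{x^{last} = 0}`), if `μ` vanishes together with
its normal derivative on the boundary and `g̃ = e^{2μ} g`, then for any smooth `f` and any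
`g̃`-geodesic `η` starting at a boundary point `p` with initial velocity the inward unit normal
`∂_n` (which is the `g̃`-unit normal since `μ(p)=0`), the derivatives of `s ↦ f(η(s))` at `s=0`
(this is `∂̃_n^m f |_p`) satisfy `∂̃_n f|_p = ∂_n f|_p` and `∂̃_n² f|_p = ∂_n² f|_p`. -/
theorem normal_derivative_comparison
    (n : ℕ) (g : Vec (n+1) → Matrix (Fin (n+1)) (Fin (n+1)) ℝ)
    (hg : ∀ j k, ContDiff ℝ (⊤ : ℕ∞) (fun x => g x j k))
    (hsymm : ∀ x, (g x).IsSymm)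
    (hpos : ∀ x, (g x).PosDef)
    (hbn : ∀ x, ∀ j : Fin (n+1), g x j (Fin.last n) = if j = Fin.last n then 1 else 0)
    (μ : Vec (n+1) → ℝ) (hμ : ContDiff ℝ (⊤ : ℕ∞) μ)
    (hμbd : ∀ p : Vec (n+1), p (Fin.last n) = 0 → μ p = 0 ∧ pd μ (Fin.last n) p = 0)
    (f : Vec (n+1) → ℝ) (hf : ContDiff ℝ (⊤ : ℕ∞) f)
    (p : Vec (n+1)) (hp : p (Fin.last n) = 0)
    (η : ℝ → Vec (n+1)) (hη : ContDiff ℝ (⊤ : ℕ∞) η) (hη0 : η 0 = p)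
    (hηvel : ∀ l : Fin (n+1),
      deriv (fun s => η s l) 0 = if l = Fin.last n then 1 else 0)
    (hgeo : ∀ (l : Fin (n+1)) (s : ℝ),
      deriv (fun t => deriv (fun r => η r l) t) s
        = - ∑ j, ∑ k, christoffel (fun y => Real.exp (2 * μ y) • g y) l j k (η s)
            * deriv (fun r => η r j) s * deriv (fun r => η r k) s) :
    deriv (fun s => f (η s)) 0 = pd f (Fin.last n) p
    ∧ iteratedDeriv 2 (fun s => f (η s)) 0
        = pd (pd f (Fin.last n)) (Fin.last n) p := by
  -- basic derivative facts about μ at p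
  have hpdμ : ∀ j : Fin (n+1), pd μ j p = 0 := by
    intro j
    by_cases hj : j = Fin.last n
    · subst hj; exact (hμbd p hp).2
    · have h0 : p + (0:ℝ) • (Pi.single j 1 : Vec (n+1)) = p := by simp
      have hc : HasDerivAt (fun t : ℝ => p + t • (Pi.single j 1 : Vec (n+1)))
          (Pi.single j 1 : Vec (n+1)) 0 := by
        simpa using ((hasDerivAt_id (0:ℝ)).smul_const (Pi.single j 1 : Vec (n+1))).const_add p
      have hμp : HasFDerivAt μ (fderiv ℝ μ p) (p + (0:ℝ) • (Pi.single j 1 : Vec (n+1))) := by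
        rw [h0]; exact (hμ.differentiable (by simp) p).hasFDerivAt
      have hcomp := hμp.comp_hasDerivAt 0 hc
      have hzero : (fun t : ℝ => μ (p + t • (Pi.single j 1 : Vec (n+1)))) = fun _ => (0:ℝ) := by
        funext t
        refine (hμbd _ ?_).1
        have : (Pi.single j 1 : Vec (n+1)) (Fin.last n) = 0 :=
          Pi.single_eq_of_ne (Ne.symm hj) 1
        simp [this, hp]
      simp only [Function.comp_def] at hcomp
      rw [hzero] at hcomp
      have := hcomp.unique (hasDerivAt_const 0 0)
      simpa [pd] using this
  have hexp : ∀ (c : ℝ) (j : Fin (n+1)), pd (fun y => Real.exp (2 * μ y) * c) j p = 0 := by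
    intro c j
    have h1 : HasFDerivAt (fun y => 2 * μ y) ((2:ℝ) • fderiv ℝ μ p) p :=
      ((hμ.differentiable (by simp) p).hasFDerivAt).const_mul 2
    have h3 := h1.exp.mul_const c
    have h4 : pd (fun y => Real.exp (2 * μ y) * c) j p
        = (c • Real.exp (2 * μ p) • (2:ℝ) • fderiv ℝ μ p) (Pi.single j 1) := by
      rw [pd, h3.fderiv]
    have h5 := hpdμ j
    rw [pd] at h5
    rw [h4]
    simp [h5]
  -- the conformal metric in the relevant slots
  have hrow : ∀ (y : Vec (n+1)) (m : Fin (n+1)),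
      (Real.exp (2 * μ y) • g y) (Fin.last n) m
        = Real.exp (2 * μ y) * (if m = Fin.last n then 1 else 0) := by
    intro y m
    rw [Matrix.smul_apply, (hsymm y).apply m (Fin.last n), hbn y m, smul_eq_mul]
  -- key: the Christoffel symbols Γ̃^l_{nn} of the conformal metric vanish at p
  have hkey : ∀ l : Fin (n+1),
      christoffel (fun y => Real.exp (2 * μ y) • g y) l (Fin.last n) (Fin.last n) p = 0 := by
    intro l
    rw [christoffel]
    rw [Finset.sum_eq_zero, mul_zero]
    intro m _
    have e1 : (fun y => (Real.exp (2 * μ y) • g y) (Fin.last n) m)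
        = fun y => Real.exp (2 * μ y) * (if m = Fin.last n then 1 else 0) :=
      funext fun y => hrow y m
    have e2 : (fun y => (Real.exp (2 * μ y) • g y) (Fin.last n) (Fin.last n))
        = fun y => Real.exp (2 * μ y) * (if (Fin.last n : Fin (n+1)) = Fin.last n then 1 else 0) :=
      funext fun y => hrow y (Fin.last n)
    rw [e1, e2, hexp, hexp]
    ring
  -- first derivative
  have hderiv1 : ∀ s, deriv (fun t => f (η t)) s
      = ∑ l, pd f l (η s) * deriv (fun r => η r l) s :=
    fun s => (hasDerivAt_comp_curve f hf η hη s).deriv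
  have first : deriv (fun s => f (η s)) 0 = pd f (Fin.last n) p := by
    rw [hderiv1 0, hη0]
    simp [hηvel, mul_ite, mul_one, mul_zero]
  refine ⟨first, ?_⟩
  -- second derivative: η'' at 0 vanishes
  have hgeo0 : ∀ l : Fin (n+1), deriv (fun t => deriv (fun r => η r l) t) 0 = 0 := by
    intro l
    rw [hgeo l 0, hη0]
    simp [hηvel, mul_ite, mul_one, mul_zero, ite_mul, zero_mul, hkey]
  -- smoothness of the coordinate velocities
  have hcoord : ∀ l : Fin (n+1), ContDiff ℝ (⊤ : ℕ∞) (fun t => η t l) := fun l =>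
    (ContinuousLinearMap.proj l : Vec (n+1) →L[ℝ] ℝ).contDiff.comp hη
  have hvelsm : ∀ l : Fin (n+1), DifferentiableAt ℝ (fun t => deriv (fun r => η r l) t) 0 := by
    intro l
    have := (contDiff_infty_iff_deriv.mp (hcoord l)).2
    exact this.differentiable (by simp) 0
  -- assemble the derivative of the first-derivative function
  have hprod : ∀ l : Fin (n+1), HasDerivAt
      (fun s => pd f l (η s) * deriv (fun r => η r l) s)
      ((∑ k, pd (pd f l) k (η 0) * deriv (fun r => η r k) 0) * deriv (fun r => η r l) 0
        + pd f l (η 0) * deriv (fun t => deriv (fun r => η r l) t) 0) 0 := by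
    intro l
    exact (hasDerivAt_comp_curve (pd f l) (pd_contDiff f hf l) η hη 0).mul
      ((hvelsm l).hasDerivAt)
  have hsum : HasDerivAt (fun s => ∑ l, pd f l (η s) * deriv (fun r => η r l) s)
      (∑ l, ((∑ k, pd (pd f l) k (η 0) * deriv (fun r => η r k) 0) * deriv (fun r => η r l) 0
        + pd f l (η 0) * deriv (fun t => deriv (fun r => η r l) t) 0)) 0 :=
    HasDerivAt.fun_sum fun l _ => hprod l
  have iter2 : iteratedDeriv 2 (fun s => f (η s)) 0
      = deriv (deriv (fun s => f (η s))) 0 := by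
    rw [show (2:ℕ) = 1 + 1 from rfl, iteratedDeriv_succ, iteratedDeriv_one]
  rw [iter2, funext hderiv1, hsum.deriv]
  rw [Finset.sum_congr rfl (fun l _ => by rw [hgeo0 l, mul_zero, add_zero])]
  rw [hη0]
  simp [hηvel, mul_ite, mul_one, mul_zero, ite_mul, zero_mul]
end
end

section
/- Let $H_1, H_2$ be smooth positive definite symmetric matrix fields on an open subset $\Omega$ of the closed upper half-space $\mathbb{H}^n = \{x^n \geq 0\}$ intersecting $\{x^n = 0\}$, of the form $H_i = dx_n^2 + h_i(x', x_n)$, and suppose $H_1 = H_2 + O(x_n^\infty)$ on $\Gamma = \Omega \cap \{x^n = 0\}$ (all $x_n$-derivatives of $H_1 - H_2$ vanish on $\Gamma$). Let $f_1, f_2$ be smooth functions on $\Omega$ with $L_{H_i} f_i = 0$ in $\{x^n > 0\} \cap \Omega$, having the same Cauchy data on $\Gamma$: $f_1 = f_2$ and $\partial_{x_n} f_1 = \partial_{x_n} f_2$ on $\Gamma$. Then $f_1 = f_2 + O(x_n^\infty)$, i.e., all $x_n$-derivatives of $f_1 - f_2$ vanish on $\Gamma$. -/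
open scoped BigOperators
open MeasureTheory

noncomputable section

variable {n : ℕ}

/-- Iterated partial derivative `∂_j^m f` in the fixed coordinate direction `j`. -/
def pdIter (f : Vec n → ℝ) (j : Fin n) : ℕ → Vec n → ℝ
  | 0 => f
  | m + 1 => pd (pdIter f j m) j

section Aux

variable {N : ℕ} {U : Set (Vec N)} {f g a : Vec N → ℝ} {j k ν : Fin N} {x : Vec N}


theorem pd_congr (h : f =ᶠ[nhds x] g) : pd f j x = pd g j x := by
  unfold pd; rw [Filter.EventuallyEq.fderiv_eq h]

theorem pd_eqOn (hU : IsOpen U) (h : Set.EqOn f g U) (hx : x ∈ U) : pd f j x = pd g j x :=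
  pd_congr (Filter.eventuallyEq_of_mem (hU.mem_nhds hx) h)

theorem pdIter_eqOn (hU : IsOpen U) (h : Set.EqOn f g U) (m : ℕ) :
    Set.EqOn (pdIter f j m) (pdIter g j m) U := by
  induction m with
  | zero => exact h
  | succ m ih => intro x hx; exact pd_eqOn hU ih hx

theorem contDiffOn_pd (hU : IsOpen U) (hf : ContDiffOn ℝ (⊤ : ℕ∞) f U) :
    ContDiffOn ℝ (⊤ : ℕ∞) (pd f j) U := by
  have h1 : ContDiffOn ℝ (⊤ : ℕ∞) (fderiv ℝ f) U := hf.fderiv_of_isOpen hU (by exact_mod_cast le_top)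
  exact h1.clm_apply contDiffOn_const

theorem contDiffOn_pdIter (hU : IsOpen U) (hf : ContDiffOn ℝ (⊤ : ℕ∞) f U) (m : ℕ) :
    ContDiffOn ℝ (⊤ : ℕ∞) (pdIter f j m) U := by
  induction m with
  | zero => exact hf
  | succ m ih => exact contDiffOn_pd hU ih


theorem pd_add (hf : DifferentiableAt ℝ f x) (hg : DifferentiableAt ℝ g x) :
    pd (fun y => f y + g y) j x = pd f j x + pd g j x := by
  unfold pd; rw [fderiv_fun_add hf hg]; rfl

theorem pd_sub (hf : DifferentiableAt ℝ f x) (hg : DifferentiableAt ℝ g x) :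
    pd (fun y => f y - g y) j x = pd f j x - pd g j x := by
  unfold pd; rw [fderiv_fun_sub hf hg]; rfl

theorem pd_mul (hf : DifferentiableAt ℝ f x) (hg : DifferentiableAt ℝ g x) :
    pd (fun y => f y * g y) j x = pd f j x * g x + f x * pd g j x := by
  unfold pd; rw [fderiv_fun_mul hf hg]; simp [ContinuousLinearMap.add_apply]; ring

theorem pd_const (c : ℝ) : pd (fun _ => c) j x = 0 := by
  unfold pd; rw [fderiv_fun_const]; rfl

theorem pd_const_mul (hf : DifferentiableAt ℝ f x) (c : ℝ) :
    pd (fun y => c * f y) j x = c * pd f j x := by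
  unfold pd; rw [fderiv_const_mul hf]; rfl

theorem pdIter_shift (m : ℕ) : pdIter (pd f j) j m = pdIter f j (m+1) := by
  induction m with
  | zero => rfl
  | succ m ih => show pd (pdIter (pd f j) j m) j = _; rw [ih]; rfl


theorem hasDerivAt_line (hf : DifferentiableAt ℝ f x) (v : Vec N) :
    HasDerivAt (fun t : ℝ => f (x + t • v)) (fderiv ℝ f x v) 0 := by
  have hline : HasDerivAt (fun t : ℝ => x + t • v) v 0 := by
    simpa using ((hasDerivAt_id (0:ℝ)).smul_const v).const_add x
  have hf' : HasFDerivAt f (fderiv ℝ f x) (x + (0:ℝ) • v) := by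
    simpa using hf.hasFDerivAt
  exact hf'.comp_hasDerivAt (0:ℝ) hline

theorem pd_tangent_zero (hU : IsOpen U) (hvan : ∀ p ∈ U, p ν = 0 → f p = 0)
    (hjν : j ≠ ν) (hx : x ∈ U) (hx0 : x ν = 0) : pd f j x = 0 := by
  by_cases hdf : DifferentiableAt ℝ f x
  · set v : Vec N := Pi.single j (1:ℝ) with hv
    have h1 : HasDerivAt (fun t : ℝ => f (x + t • v)) (fderiv ℝ f x v) 0 := hasDerivAt_line hdf _
    have hc : Continuous (fun t : ℝ => x + t • v) := by continuity
    have hmem : ∀ᶠ t in nhds (0:ℝ), (x + t • v) ∈ U :=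
      hc.continuousAt.preimage_mem_nhds (hU.mem_nhds (by simpa using hx))
    have hzero : (fun t : ℝ => f (x + t • v)) =ᶠ[nhds (0:ℝ)] (fun _ => 0) := by
      filter_upwards [hmem] with t ht
      refine hvan _ ht ?_
      have : v ν = 0 := Pi.single_eq_of_ne (Ne.symm hjν) 1
      simp [hx0, this]
    have h2 : HasDerivAt (fun _ : ℝ => (0:ℝ)) (fderiv ℝ f x v) 0 :=
      h1.congr_of_eventuallyEq hzero.symm
    have := h2.unique (hasDerivAt_const 0 0)
    simpa [pd, hv] using this
  · simp [pd, fderiv_zero_of_not_differentiableAt hdf]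

theorem pd_normal_zero (hU : IsOpen U) (hvan : ∀ p ∈ U, 0 ≤ p ν → f p = 0)
    (hx : x ∈ U) (hx0 : x ν = 0) : pd f ν x = 0 := by
  by_cases hdf : DifferentiableAt ℝ f x
  · set v : Vec N := Pi.single ν (1:ℝ) with hv
    set h : ℝ → ℝ := fun t => f (x + t • v) with hh
    have h1 : HasDerivAt h (fderiv ℝ f x v) 0 := hasDerivAt_line hdf _
    have hc : Continuous (fun t : ℝ => x + t • v) := by continuity
    have hmem : ∀ᶠ t in nhds (0:ℝ), (x + t • v) ∈ U :=
      hc.continuousAt.preimage_mem_nhds (hU.mem_nhds (by simpa using hx))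
    have hslope : Filter.Tendsto (slope h 0) (nhdsWithin 0 {(0:ℝ)}ᶜ)
        (nhds (fderiv ℝ f x v)) := hasDerivAt_iff_tendsto_slope.1 h1
    have hslope' : Filter.Tendsto (slope h 0) (nhdsWithin 0 (Set.Ioi 0))
        (nhds (fderiv ℝ f x v)) :=
      hslope.mono_left (nhdsWithin_mono _ (fun t ht => ne_of_gt ht))
    have hzero : (slope h 0) =ᶠ[nhdsWithin 0 (Set.Ioi 0)] (fun _ => 0) := by
      have hmem' : ∀ᶠ t in nhdsWithin (0:ℝ) (Set.Ioi 0), (x + t • v) ∈ U :=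
        nhdsWithin_le_nhds hmem
      filter_upwards [hmem', self_mem_nhdsWithin] with t ht ht'
      have hvν : v ν = 1 := by simp [hv]
      have hft : h t = 0 := hvan _ ht (by simp [hx0, hvν]; exact le_of_lt ht')
      have hf0 : h 0 = 0 := hvan _ (by simpa using hx) (by simp [hx0])
      simp [slope, hft, hf0]
    have h2 : Filter.Tendsto (slope h 0) (nhdsWithin 0 (Set.Ioi 0)) (nhds 0) := by
      rw [Filter.tendsto_congr' hzero]; exact tendsto_const_nhds
    have := tendsto_nhds_unique hslope' h2
    simpa [pd, hv] using this
  · simp [pd, fderiv_zero_of_not_differentiableAt hdf]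


/-- If f vanishes on U ∩ {0 ≤ xν}, so does each partial derivative. -/
theorem pd_halfspace_zero (hU : IsOpen U) (hvan : ∀ p ∈ U, 0 ≤ p ν → f p = 0) (j : Fin N) :
    ∀ p ∈ U, 0 ≤ p ν → pd f j p = 0 := by
  intro p hp hp0
  rcases eq_or_lt_of_le hp0 with h0 | h0
  · by_cases hjν : j = ν
    · subst hjν; exact pd_normal_zero hU hvan hp h0.symm
    · exact pd_tangent_zero hU (fun q hq hq0 => hvan q hq (le_of_eq hq0.symm)) hjν hp h0.symm
  · -- interior point: f vanishes on a neighborhood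
    have hopen : IsOpen (U ∩ {y : Vec N | 0 < y ν}) := by
      refine hU.inter ?_
      have : Continuous (fun y : Vec N => y ν) := continuous_apply ν
      exact isOpen_lt continuous_const this
    have hmem : (U ∩ {y : Vec N | 0 < y ν}) ∈ nhds p := hopen.mem_nhds ⟨hp, h0⟩
    have : f =ᶠ[nhds p] (fun _ => 0) := by
      filter_upwards [hmem] with q ⟨hq, hq0⟩
      exact hvan q hq (le_of_lt hq0)
    rw [pd_congr this]
    simp [pd, fderiv_const]

theorem pdIter_halfspace_zero (hU : IsOpen U) (hvan : ∀ p ∈ U, 0 ≤ p ν → f p = 0) (m : ℕ) :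
    ∀ p ∈ U, 0 ≤ p ν → pdIter f ν m p = 0 := by
  induction m with
  | zero => exact hvan
  | succ m ih => exact pd_halfspace_zero hU ih ν

/-- Schwarz symmetry of second partials for C^∞ functions on open sets. -/
theorem pd_comm (hU : IsOpen U) (hf : ContDiffOn ℝ (⊤ : ℕ∞) f U) (hx : x ∈ U) :
    pd (pd f j) k x = pd (pd f k) j x := by
  have hf1 : ContDiffOn ℝ (⊤ : ℕ∞) (fderiv ℝ f) U := hf.fderiv_of_isOpen hU (by exact_mod_cast le_top)
  have hdf : ∀ y ∈ U, DifferentiableAt ℝ f y := fun y hy =>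
    (hf.differentiableOn (by simp)).differentiableAt (hU.mem_nhds hy)
  have hdf' : DifferentiableAt ℝ (fderiv ℝ f) x :=
    (hf1.differentiableOn (by simp)).differentiableAt (hU.mem_nhds hx)
  have hev : ∀ᶠ y in nhds x, HasFDerivAt f (fderiv ℝ f y) y := by
    filter_upwards [hU.mem_nhds hx] with y hy
    exact (hdf y hy).hasFDerivAt
  have hsymm := second_derivative_symmetric_of_eventually_of_real hev hdf'.hasFDerivAt
  -- express pd (pd f j) k via second derivative
  have key : ∀ a b : Fin N, pd (pd f a) b x =
      (fderiv ℝ (fderiv ℝ f) x (Pi.single b 1)) (Pi.single a 1) := by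
    intro a b
    have : pd f a = fun y => (fderiv ℝ f y) (Pi.single a 1) := rfl
    unfold pd
    rw [fderiv_clm_apply hdf' (differentiableAt_const _)]
    simp
  rw [key j k, key k j, hsymm]


theorem diffAt_of_cd (hU : IsOpen U) (hf : ContDiffOn ℝ (⊤ : ℕ∞) f U) (hx : x ∈ U) :
    DifferentiableAt ℝ f x :=
  (hf.differentiableOn (by simp)).differentiableAt (hU.mem_nhds hx)

theorem pdIter_add (hU : IsOpen U) (hf : ContDiffOn ℝ (⊤ : ℕ∞) f U)
    (hg : ContDiffOn ℝ (⊤ : ℕ∞) g U) (m : ℕ) :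
    ∀ x ∈ U, pdIter (fun y => f y + g y) j m x = pdIter f j m x + pdIter g j m x := by
  induction m with
  | zero => intro x _; rfl
  | succ m ih =>
    intro x hx
    show pd (pdIter (fun y => f y + g y) j m) j x = _
    rw [pd_eqOn hU (fun y hy => ih y hy) hx]
    exact pd_add (diffAt_of_cd hU (contDiffOn_pdIter hU hf m) hx)
      (diffAt_of_cd hU (contDiffOn_pdIter hU hg m) hx)

theorem pdIter_sub (hU : IsOpen U) (hf : ContDiffOn ℝ (⊤ : ℕ∞) f U)
    (hg : ContDiffOn ℝ (⊤ : ℕ∞) g U) (m : ℕ) :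
    ∀ x ∈ U, pdIter (fun y => f y - g y) j m x = pdIter f j m x - pdIter g j m x := by
  induction m with
  | zero => intro x _; rfl
  | succ m ih =>
    intro x hx
    show pd (pdIter (fun y => f y - g y) j m) j x = _
    rw [pd_eqOn hU (fun y hy => ih y hy) hx]
    exact pd_sub (diffAt_of_cd hU (contDiffOn_pdIter hU hf m) hx)
      (diffAt_of_cd hU (contDiffOn_pdIter hU hg m) hx)

theorem pdIter_zero_fun (m : ℕ) : pdIter (fun _ : Vec N => (0:ℝ)) j m = fun _ => (0:ℝ) := by
  induction m with
  | zero => rfl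
  | succ m ihm =>
    show pd (pdIter (fun _ : Vec N => (0:ℝ)) j m) j = _
    rw [ihm]
    funext x
    simp [pd, fderiv_const]

theorem pdIter_sum (hU : IsOpen U) {ι : Type*} (s : Finset ι) (F : ι → Vec N → ℝ)
    (hF : ∀ i ∈ s, ContDiffOn ℝ (⊤ : ℕ∞) (F i) U) (m : ℕ) :
    ∀ x ∈ U, pdIter (fun y => ∑ i ∈ s, F i y) j m x = ∑ i ∈ s, pdIter (F i) j m x := by
  classical
  induction s using Finset.induction with
  | empty =>
    intro x hx
    have h0 : Set.EqOn (fun y : Vec N => ∑ i ∈ (∅ : Finset ι), F i y) (fun _ => (0:ℝ)) U :=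
      fun y _ => by simp
    have := pdIter_eqOn (j := j) hU h0 m hx
    rw [this, pdIter_zero_fun]
    simp
  | @insert a s ha ih =>
    intro x hx
    have h0 : Set.EqOn (fun y : Vec N => ∑ i ∈ insert a s, F i y)
        (fun y => F a y + ∑ i ∈ s, F i y) U := fun y _ => by simp [Finset.sum_insert ha]
    have hFs : ContDiffOn ℝ (⊤ : ℕ∞) (fun y => ∑ i ∈ s, F i y) U := by
      apply ContDiffOn.sum; intro i hi; exact hF i (Finset.mem_insert_of_mem hi)
    have := pdIter_eqOn (j := j) hU h0 m hx
    have hins : (∑ i ∈ insert a s, pdIter (F i) j m x)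
        = pdIter (F a) j m x + ∑ i ∈ s, pdIter (F i) j m x := Finset.sum_insert ha
    rw [this, pdIter_add hU (hF a (Finset.mem_insert_self a s)) hFs m x hx, hins]
    congr 1
    exact ih (fun i hi => hF i (Finset.mem_insert_of_mem hi)) x hx


/-- Commute a tangential derivative past iterated normal derivatives. -/
theorem pdIter_comm (hU : IsOpen U) (hf : ContDiffOn ℝ (⊤ : ℕ∞) f U) (m : ℕ) :
    ∀ x ∈ U, pdIter (pd f j) ν m x = pd (pdIter f ν m) j x := by
  induction m with
  | zero => intro x _; rfl
  | succ m ih =>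
    intro x hx
    show pd (pdIter (pd f j) ν m) ν x = _
    rw [pd_eqOn hU (fun y hy => ih y hy) hx]
    exact pd_comm hU (contDiffOn_pdIter hU hf m) hx

/-- finite-order jets vanish for a product, given vanishing jets of one factor -/
theorem jet_mul (hU : IsOpen U) (m : ℕ) :
    ∀ a f : Vec N → ℝ, ContDiffOn ℝ (⊤ : ℕ∞) a U → ContDiffOn ℝ (⊤ : ℕ∞) f U →
    (∀ i ≤ m, ∀ p ∈ U, p ν = 0 → pdIter f ν i p = 0) →
    ∀ p ∈ U, p ν = 0 → pdIter (fun y => a y * f y) ν m p = 0 := by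
  induction m with
  | zero =>
    intro a f _ _ hjet p hp hp0
    have h0 : f p = 0 := hjet 0 le_rfl p hp hp0
    show a p * f p = 0
    rw [h0]; ring
  | succ m ih =>
    intro a f ha hf hjet p hp hp0
    have heq : Set.EqOn (pd (fun y => a y * f y) ν)
        (fun y => pd a ν y * f y + a y * pd f ν y) U := by
      intro y hy
      exact pd_mul (diffAt_of_cd hU ha hy) (diffAt_of_cd hU hf hy)
    have h1 : pdIter (fun y => a y * f y) ν (m+1) p
        = pdIter (pd (fun y => a y * f y) ν) ν m p := (congrFun (pdIter_shift m) p).symm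
    rw [h1, pdIter_eqOn hU heq m hp,
      pdIter_add hU ((contDiffOn_pd hU ha).mul hf) (ha.mul (contDiffOn_pd hU hf)) m p hp]
    have e1 := ih (pd a ν) f (contDiffOn_pd hU ha) hf
      (fun i hi => hjet i (le_trans hi (Nat.le_succ m))) p hp hp0
    have e2 := ih a (pd f ν) ha (contDiffOn_pd hU hf)
      (fun i hi q hq hq0 => by
        rw [congrFun (pdIter_shift i) q]
        exact hjet (i+1) (Nat.succ_le_succ hi) q hq hq0) p hp hp0
    rw [e1, e2]; ring


theorem contDiffOn_finprod {ι : Type*} (s : Finset ι) (F : ι → Vec N → ℝ)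
    (hF : ∀ i ∈ s, ContDiffOn ℝ (⊤ : ℕ∞) (F i) U) :
    ContDiffOn ℝ (⊤ : ℕ∞) (fun y => ∏ i ∈ s, F i y) U := by
  classical
  induction s using Finset.induction with
  | empty => simpa using contDiffOn_const
  | @insert a s ha ih =>
    have : (fun y => ∏ i ∈ insert a s, F i y) = fun y => F a y * ∏ i ∈ s, F i y := by
      funext y; exact Finset.prod_insert ha
    rw [this]
    exact (hF a (Finset.mem_insert_self a s)).mul
      (ih (fun i hi => hF i (Finset.mem_insert_of_mem hi)))

theorem contDiffOn_det (M : Vec N → Matrix (Fin N) (Fin N) ℝ)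
    (hM : ∀ a b, ContDiffOn ℝ (⊤ : ℕ∞) (fun x => M x a b) U) :
    ContDiffOn ℝ (⊤ : ℕ∞) (fun x => (M x).det) U := by
  have : (fun x => (M x).det) = fun x =>
      ∑ σ : Equiv.Perm (Fin N), ((Equiv.Perm.sign σ : ℤ) : ℝ) * ∏ i, M x (σ i) i := by
    funext x
    rw [Matrix.det_apply]
    congr 1; funext σ
    simp [Units.smul_def, zsmul_eq_mul]
  rw [this]
  apply ContDiffOn.sum
  intro σ _
  exact contDiffOn_const.mul (contDiffOn_finprod Finset.univ _ (fun i _ => hM (σ i) i))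

theorem contDiffOn_ginv (H : Vec N → Matrix (Fin N) (Fin N) ℝ)
    (hH : ∀ a b, ContDiffOn ℝ (⊤ : ℕ∞) (fun x => H x a b) U)
    (hdet : ∀ x ∈ U, (H x).det ≠ 0) (a b : Fin N) :
    ContDiffOn ℝ (⊤ : ℕ∞) (fun x => ginv H x a b) U := by
  classical
  have hadj : ContDiffOn ℝ (⊤ : ℕ∞) (fun x => (H x).adjugate a b) U := by
    have : (fun x => (H x).adjugate a b)
        = fun x => ((H x).updateRow b (Pi.single a 1)).det := by
      funext x; rw [Matrix.adjugate_apply]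
    rw [this]
    apply contDiffOn_det
    intro c d
    have hupd : (fun x => ((H x).updateRow b (Pi.single a 1)) c d)
        = fun x => if c = b then (Pi.single a 1 : Fin N → ℝ) d else H x c d := by
      funext x; rw [Matrix.updateRow_apply]
    rw [hupd]
    by_cases hc : c = b
    · simp only [if_pos hc]; exact contDiffOn_const
    · simp only [if_neg hc]; exact hH c d
  have : Set.EqOn (fun x => ginv H x a b)
      (fun x => ((H x).det)⁻¹ * (H x).adjugate a b) U := by
    intro x hx
    show (H x)⁻¹ a b = _
    rw [Matrix.inv_def]
    simp [Ring.inverse_eq_inv', smul_eq_mul]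
  exact (((contDiffOn_det H hH).inv hdet).mul hadj).congr this

theorem ginv_last_entry (H : Vec N → Matrix (Fin N) (Fin N) ℝ) (ν : Fin N)
    (hdet : (H x).det ≠ 0)
    (hform : ∀ j : Fin N, H x j ν = if j = ν then 1 else 0) :
    ginv H x ν ν = 1 := by
  have hmv : Matrix.mulVec (H x) (Pi.single ν 1 : Fin N → ℝ) = Pi.single ν 1 := by
    funext j
    rw [Matrix.mulVec_single]
    simp [hform j, Pi.single_apply]
  have h2 : Matrix.mulVec (H x)⁻¹ (Pi.single ν 1 : Fin N → ℝ) = Pi.single ν 1 := by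
    conv_lhs => rw [← hmv]
    rw [Matrix.mulVec_mulVec, Matrix.nonsing_inv_mul _ (isUnit_iff_ne_zero.2 hdet),
      Matrix.one_mulVec]
  have := congrFun h2 ν
  rw [Matrix.mulVec_single] at this
  simpa [ginv] using this


/-- The tangential/lower-order part of the conformal Laplacian. -/
def Qop {n : ℕ} (ν : Fin n) (g : Vec n → Matrix (Fin n) (Fin n) ℝ) (f : Vec n → ℝ)
    (x : Vec n) : ℝ :=
  (∑ j, ∑ k, (-(ginv g x j k)) *
    ((if j = ν ∧ k = ν then 0 else pd (pd f j) k x) - ∑ l, christoffel g l j k x * pd f l x))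
  + (((n : ℝ) - 2) / (4 * ((n : ℝ) - 1))) * scalarCurvature g x * f x

section Geo

variable {N : ℕ} {U : Set (Vec N)} {f g a : Vec N → ℝ} {j k ν : Fin N} {x : Vec N}

theorem confLaplacian_eq_Qop (g : Vec N → Matrix (Fin N) (Fin N) ℝ) (f : Vec N → ℝ)
    (x : Vec N) (ν : Fin N) (hgν : ginv g x ν ν = 1) :
    confLaplacian g f x = - pd (pd f ν) ν x + Qop ν g f x := by
  unfold confLaplacian laplaceBeltrami Qop
  have key : (∑ j, ∑ k, ginv g x j k *
      (pd (pd f j) k x - ∑ l, christoffel g l j k x * pd f l x))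
      = pd (pd f ν) ν x + ∑ j, ∑ k, ginv g x j k *
        ((if j = ν ∧ k = ν then 0 else pd (pd f j) k x)
          - ∑ l, christoffel g l j k x * pd f l x) := by
    have hterm : ∀ j k : Fin N, ginv g x j k *
        (pd (pd f j) k x - ∑ l, christoffel g l j k x * pd f l x)
        = ginv g x j k * ((if j = ν ∧ k = ν then 0 else pd (pd f j) k x)
            - ∑ l, christoffel g l j k x * pd f l x)
          + (if j = ν ∧ k = ν then pd (pd f ν) ν x else 0) := by
      intro j k
      by_cases h : j = ν ∧ k = ν
      · rw [if_pos h, if_pos h, h.1, h.2, hgν]; ring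
      · simp only [if_neg h]; ring
    calc (∑ j, ∑ k, ginv g x j k *
        (pd (pd f j) k x - ∑ l, christoffel g l j k x * pd f l x))
        = ∑ j, ∑ k, (ginv g x j k * ((if j = ν ∧ k = ν then 0 else pd (pd f j) k x)
            - ∑ l, christoffel g l j k x * pd f l x)
          + (if j = ν ∧ k = ν then pd (pd f ν) ν x else 0)) := by
          apply Finset.sum_congr rfl; intro j _; apply Finset.sum_congr rfl; intro k _
          exact hterm j k
      _ = (∑ j, ∑ k, ginv g x j k * ((if j = ν ∧ k = ν then 0 else pd (pd f j) k x)
            - ∑ l, christoffel g l j k x * pd f l x))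
          + ∑ j, ∑ k, (if j = ν ∧ k = ν then pd (pd f ν) ν x else 0) := by
          rw [← Finset.sum_add_distrib]
          apply Finset.sum_congr rfl; intro j _
          rw [← Finset.sum_add_distrib]
      _ = (∑ j, ∑ k, ginv g x j k * ((if j = ν ∧ k = ν then 0 else pd (pd f j) k x)
            - ∑ l, christoffel g l j k x * pd f l x)) + pd (pd f ν) ν x := by
          congr 1
          have : ∀ j : Fin N, (∑ k, (if j = ν ∧ k = ν then pd (pd f ν) ν x else 0))
              = if j = ν then pd (pd f ν) ν x else 0 := by
            intro j
            by_cases hj : j = ν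
            · subst hj
              simp
            · simp [hj]
          simp only [this]
          simp
      _ = pd (pd f ν) ν x + ∑ j, ∑ k, ginv g x j k *
          ((if j = ν ∧ k = ν then 0 else pd (pd f j) k x)
            - ∑ l, christoffel g l j k x * pd f l x) := by ring
  rw [key]
  simp only [neg_mul, Finset.sum_neg_distrib]
  ring

end Geo

section Smooth

variable {N : ℕ} {U : Set (Vec N)} {x : Vec N}
variable (hU : IsOpen U)
variable {H : Vec N → Matrix (Fin N) (Fin N) ℝ}
variable (hH : ∀ a b, ContDiffOn ℝ (⊤ : ℕ∞) (fun x => H x a b) U)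
variable (hdet : ∀ x ∈ U, (H x).det ≠ 0)

include hU hH hdet

theorem cd_ginv (a b : Fin N) : ContDiffOn ℝ (⊤ : ℕ∞) (fun x => ginv H x a b) U :=
  contDiffOn_ginv H hH hdet a b

theorem cd_christoffel (l j k : Fin N) :
    ContDiffOn ℝ (⊤ : ℕ∞) (christoffel H l j k) U := by
  have : christoffel H l j k = fun x => (1/2) * ∑ m, ginv H x l m *
      (pd (fun y => H y k m) j x + pd (fun y => H y j m) k x - pd (fun y => H y j k) m x) :=
    rfl
  rw [this]
  apply ContDiffOn.mul contDiffOn_const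
  apply ContDiffOn.sum
  intro m _
  exact (cd_ginv hU hH hdet l m).mul
    (((contDiffOn_pd hU (hH k m)).add (contDiffOn_pd hU (hH j m))).sub
      (contDiffOn_pd hU (hH j k)))

theorem cd_riemann (l i j k : Fin N) :
    ContDiffOn ℝ (⊤ : ℕ∞) (riemann H l i j k) U := by
  have : riemann H l i j k = fun x => pd (christoffel H l j k) i x
      - pd (christoffel H l i k) j x
      + ∑ m, christoffel H l i m x * christoffel H m j k x
      - ∑ m, christoffel H l j m x * christoffel H m i k x := rfl
  rw [this]
  apply ContDiffOn.sub
  apply ContDiffOn.add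
  apply ContDiffOn.sub
  · exact contDiffOn_pd hU (cd_christoffel hU hH hdet l j k)
  · exact contDiffOn_pd hU (cd_christoffel hU hH hdet l i k)
  · exact ContDiffOn.sum (fun m _ => (cd_christoffel hU hH hdet l i m).mul
      (cd_christoffel hU hH hdet m j k))
  · exact ContDiffOn.sum (fun m _ => (cd_christoffel hU hH hdet l j m).mul
      (cd_christoffel hU hH hdet m i k))

theorem cd_scalar : ContDiffOn ℝ (⊤ : ℕ∞) (scalarCurvature H) U := by
  have : scalarCurvature H = fun x => ∑ j, ∑ k, ginv H x j k * ∑ i, riemann H i i j k x := rfl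
  rw [this]
  apply ContDiffOn.sum; intro j _
  apply ContDiffOn.sum; intro k _
  exact (cd_ginv hU hH hdet j k).mul
    (ContDiffOn.sum (fun i _ => cd_riemann hU hH hdet i i j k))

theorem cd_Qop (ν : Fin N) {f : Vec N → ℝ} (hf : ContDiffOn ℝ (⊤ : ℕ∞) f U) :
    ContDiffOn ℝ (⊤ : ℕ∞) (Qop ν H f) U := by
  have : Qop ν H f = fun x => (∑ j, ∑ k, (-(ginv H x j k)) *
      ((if j = ν ∧ k = ν then 0 else pd (pd f j) k x)
        - ∑ l, christoffel H l j k x * pd f l x))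
      + (((N : ℝ) - 2) / (4 * ((N : ℝ) - 1))) * scalarCurvature H x * f x := rfl
  rw [this]
  apply ContDiffOn.add
  · apply ContDiffOn.sum; intro j _
    apply ContDiffOn.sum; intro k _
    apply ContDiffOn.mul
    · exact (cd_ginv hU hH hdet j k).neg
    · apply ContDiffOn.sub
      · by_cases h : j = ν ∧ k = ν
        · simp only [if_pos h]; exact contDiffOn_const
        · simp only [if_neg h]; exact contDiffOn_pd hU (contDiffOn_pd hU hf)
      · exact ContDiffOn.sum (fun l _ => (cd_christoffel hU hH hdet l j k).mul
          (contDiffOn_pd hU hf))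
  · exact (contDiffOn_const.mul (cd_scalar hU hH hdet)).mul hf

end Smooth

section Jets

variable {N : ℕ} {U : Set (Vec N)} {f g a : Vec N → ℝ} {j k : Fin N} {ν : Fin N} {x : Vec N}

/-- all normal jets vanish on Γ = U ∩ {x ν = 0} -/
def Jet (U : Set (Vec N)) (ν : Fin N) (f : Vec N → ℝ) : Prop :=
  ∀ m : ℕ, ∀ p ∈ U, p ν = 0 → pdIter f ν m p = 0

theorem jet_congr (hU : IsOpen U) (h : Set.EqOn f g U) (hf : Jet U ν f) : Jet U ν g :=
  fun m p hp hp0 => by rw [← pdIter_eqOn hU h m hp]; exact hf m p hp hp0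

theorem jet_add (hU : IsOpen U) (hfc : ContDiffOn ℝ (⊤ : ℕ∞) f U)
    (hgc : ContDiffOn ℝ (⊤ : ℕ∞) g U) (hf : Jet U ν f) (hg : Jet U ν g) :
    Jet U ν (fun y => f y + g y) := by
  intro m p hp hp0
  rw [pdIter_add hU hfc hgc m p hp, hf m p hp hp0, hg m p hp hp0]; ring

theorem jet_mul' (hU : IsOpen U) (ha : ContDiffOn ℝ (⊤ : ℕ∞) a U)
    (hfc : ContDiffOn ℝ (⊤ : ℕ∞) f U) (hf : Jet U ν f) :
    Jet U ν (fun y => a y * f y) := by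
  intro m p hp hp0
  exact jet_mul hU m a f ha hfc (fun i _ => hf i) p hp hp0

theorem jet_mul_right (hU : IsOpen U) (ha : ContDiffOn ℝ (⊤ : ℕ∞) a U)
    (hfc : ContDiffOn ℝ (⊤ : ℕ∞) f U) (hf : Jet U ν f) :
    Jet U ν (fun y => f y * a y) := by
  have : Set.EqOn (fun y => a y * f y) (fun y => f y * a y) U := fun y _ => mul_comm _ _
  exact jet_congr hU this (jet_mul' hU ha hfc hf)

theorem jet_const_mul (hU : IsOpen U) (c : ℝ) (hfc : ContDiffOn ℝ (⊤ : ℕ∞) f U)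
    (hf : Jet U ν f) : Jet U ν (fun y => c * f y) :=
  jet_mul' hU contDiffOn_const hfc hf

theorem jet_sub (hU : IsOpen U) (hfc : ContDiffOn ℝ (⊤ : ℕ∞) f U)
    (hgc : ContDiffOn ℝ (⊤ : ℕ∞) g U) (hf : Jet U ν f) (hg : Jet U ν g) :
    Jet U ν (fun y => f y - g y) := by
  have h1 : Jet U ν (fun y => f y + (-1) * g y) :=
    jet_add hU hfc (contDiffOn_const.mul hgc) hf (jet_const_mul hU (-1) hgc hg)
  have : Set.EqOn (fun y => f y + (-1) * g y) (fun y => f y - g y) U := fun y _ => by ring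
  exact jet_congr hU this h1

theorem jet_sum (hU : IsOpen U) {ι : Type*} (s : Finset ι) (F : ι → Vec N → ℝ)
    (hFc : ∀ i ∈ s, ContDiffOn ℝ (⊤ : ℕ∞) (F i) U) (hF : ∀ i ∈ s, Jet U ν (F i)) :
    Jet U ν (fun y => ∑ i ∈ s, F i y) := by
  intro m p hp hp0
  rw [pdIter_sum hU s F hFc m p hp]
  exact Finset.sum_eq_zero (fun i hi => hF i hi m p hp hp0)

theorem jet_pd (hU : IsOpen U) (hfc : ContDiffOn ℝ (⊤ : ℕ∞) f U) (hf : Jet U ν f)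
    (j : Fin N) : Jet U ν (pd f j) := by
  intro m p hp hp0
  by_cases hjν : j = ν
  · subst hjν
    rw [congrFun (pdIter_shift m) p]
    exact hf (m+1) p hp hp0
  · rw [pdIter_comm hU hfc m p hp]
    exact pd_tangent_zero hU (fun q hq hq0 => hf m q hq hq0) hjν hp hp0

theorem jet_mul_sub (hU : IsOpen U) {a₁ a₂ b₁ b₂ : Vec N → ℝ}
    (ha₁ : ContDiffOn ℝ (⊤ : ℕ∞) a₁ U) (ha₂ : ContDiffOn ℝ (⊤ : ℕ∞) a₂ U)
    (hb₁ : ContDiffOn ℝ (⊤ : ℕ∞) b₁ U) (hb₂ : ContDiffOn ℝ (⊤ : ℕ∞) b₂ U)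
    (hda : Jet U ν (fun y => a₁ y - a₂ y)) (hdb : Jet U ν (fun y => b₁ y - b₂ y)) :
    Jet U ν (fun y => a₁ y * b₁ y - a₂ y * b₂ y) := by
  have h1 : Jet U ν (fun y => b₁ y * (a₁ y - a₂ y) + a₂ y * (b₁ y - b₂ y)) :=
    jet_add hU (hb₁.mul (ha₁.sub ha₂)) (ha₂.mul (hb₁.sub hb₂))
      (jet_mul' hU hb₁ (ha₁.sub ha₂) hda) (jet_mul' hU ha₂ (hb₁.sub hb₂) hdb)
  have : Set.EqOn (fun y => b₁ y * (a₁ y - a₂ y) + a₂ y * (b₁ y - b₂ y))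
      (fun y => a₁ y * b₁ y - a₂ y * b₂ y) U := fun y _ => by ring
  exact jet_congr hU this h1

end Jets

section MetricDiff

variable {N : ℕ} {U : Set (Vec N)} {ν : Fin N}
variable (hU : IsOpen U)
variable {H₁ H₂ : Vec N → Matrix (Fin N) (Fin N) ℝ}
variable (hH₁ : ∀ a b, ContDiffOn ℝ (⊤ : ℕ∞) (fun x => H₁ x a b) U)
variable (hH₂ : ∀ a b, ContDiffOn ℝ (⊤ : ℕ∞) (fun x => H₂ x a b) U)
variable (hdet₁ : ∀ x ∈ U, (H₁ x).det ≠ 0) (hdet₂ : ∀ x ∈ U, (H₂ x).det ≠ 0)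
variable (hjd : ∀ a b, Jet U ν (fun x => H₁ x a b - H₂ x a b))

include hU hH₁ hH₂ hdet₁ hdet₂ hjd

theorem jet_entry_diff' (a b : Fin N) : Jet U ν (fun x => H₂ x a b - H₁ x a b) := by
  have h1 : Jet U ν (fun x => (-1) * (H₁ x a b - H₂ x a b)) :=
    jet_const_mul hU (-1) ((hH₁ a b).sub (hH₂ a b)) (hjd a b)
  exact jet_congr hU (fun y _ => by ring) h1

theorem jet_ginv_diff (a b : Fin N) :
    Jet U ν (fun x => ginv H₁ x a b - ginv H₂ x a b) := by
  have heq : Set.EqOn (fun x => ∑ d, ∑ c,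
      ((ginv H₁ x a c * ginv H₂ x d b) * (H₂ x c d - H₁ x c d)))
      (fun x => ginv H₁ x a b - ginv H₂ x a b) U := by
    intro x hx
    have hA : IsUnit (H₁ x).det := isUnit_iff_ne_zero.2 (hdet₁ x hx)
    have hB : IsUnit (H₂ x).det := isUnit_iff_ne_zero.2 (hdet₂ x hx)
    have hmat : (H₁ x)⁻¹ * (H₂ x - H₁ x) * (H₂ x)⁻¹ = (H₁ x)⁻¹ - (H₂ x)⁻¹ := by
      rw [Matrix.mul_sub, Matrix.sub_mul, Matrix.mul_assoc,
        Matrix.mul_nonsing_inv _ hB, Matrix.nonsing_inv_mul _ hA,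
        Matrix.mul_one, Matrix.one_mul]
    have := congrFun (congrFun hmat a) b
    rw [Matrix.sub_apply] at this
    show (∑ d, ∑ c, (ginv H₁ x a c * ginv H₂ x d b) * (H₂ x c d - H₁ x c d))
        = ginv H₁ x a b - ginv H₂ x a b
    rw [show ginv H₁ x a b - ginv H₂ x a b = ((H₁ x)⁻¹ * (H₂ x - H₁ x) * (H₂ x)⁻¹) a b by
      rw [hmat]; rfl]
    rw [Matrix.mul_apply]
    apply Finset.sum_congr rfl
    intro d _
    rw [Matrix.mul_apply, Finset.sum_mul]
    apply Finset.sum_congr rfl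
    intro c _
    rw [Matrix.sub_apply]
    show ginv H₁ x a c * ginv H₂ x d b * (H₂ x c d - H₁ x c d)
        = (H₁ x)⁻¹ a c * (H₂ x c d - H₁ x c d) * (H₂ x)⁻¹ d b
    unfold ginv; ring
  apply jet_congr hU heq
  apply jet_sum hU
  · intro d _
    apply ContDiffOn.sum
    intro c _
    exact ((cd_ginv hU hH₁ hdet₁ a c).mul (cd_ginv hU hH₂ hdet₂ d b)).mul
      ((hH₂ c d).sub (hH₁ c d))
  · intro d _
    apply jet_sum hU
    · intro c _
      exact ((cd_ginv hU hH₁ hdet₁ a c).mul (cd_ginv hU hH₂ hdet₂ d b)).mul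
        ((hH₂ c d).sub (hH₁ c d))
    · intro c _
      exact jet_mul' hU ((cd_ginv hU hH₁ hdet₁ a c).mul (cd_ginv hU hH₂ hdet₂ d b))
        ((hH₂ c d).sub (hH₁ c d)) (jet_entry_diff' hU hH₁ hH₂ hdet₁ hdet₂ hjd c d)

theorem jet_christoffel_diff (l j k : Fin N) :
    Jet U ν (fun x => christoffel H₁ l j k x - christoffel H₂ l j k x) := by
  set b₁ : Fin N → Vec N → ℝ := fun m x => pd (fun y => H₁ y k m) j x
      + pd (fun y => H₁ y j m) k x - pd (fun y => H₁ y j k) m x with hb₁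
  set b₂ : Fin N → Vec N → ℝ := fun m x => pd (fun y => H₂ y k m) j x
      + pd (fun y => H₂ y j m) k x - pd (fun y => H₂ y j k) m x with hb₂
  have hb₁c : ∀ m, ContDiffOn ℝ (⊤ : ℕ∞) (b₁ m) U := fun m =>
    ((contDiffOn_pd hU (hH₁ k m)).add (contDiffOn_pd hU (hH₁ j m))).sub
      (contDiffOn_pd hU (hH₁ j k))
  have hb₂c : ∀ m, ContDiffOn ℝ (⊤ : ℕ∞) (b₂ m) U := fun m =>
    ((contDiffOn_pd hU (hH₂ k m)).add (contDiffOn_pd hU (hH₂ j m))).sub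
      (contDiffOn_pd hU (hH₂ j k))
  have hdb : ∀ m, Jet U ν (fun x => b₁ m x - b₂ m x) := by
    intro m
    have heq : Set.EqOn
        (fun x => pd (fun y => H₁ y k m - H₂ y k m) j x
          + pd (fun y => H₁ y j m - H₂ y j m) k x
          - pd (fun y => H₁ y j k - H₂ y j k) m x)
        (fun x => b₁ m x - b₂ m x) U := by
      intro x hx
      have e1 := pd_sub (j := j) (diffAt_of_cd hU (hH₁ k m) hx) (diffAt_of_cd hU (hH₂ k m) hx)
      have e2 := pd_sub (j := k) (diffAt_of_cd hU (hH₁ j m) hx) (diffAt_of_cd hU (hH₂ j m) hx)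
      have e3 := pd_sub (j := m) (diffAt_of_cd hU (hH₁ j k) hx) (diffAt_of_cd hU (hH₂ j k) hx)
      show _ = b₁ m x - b₂ m x
      rw [hb₁, hb₂]
      simp only []
      rw [e1, e2, e3]; ring
    apply jet_congr hU heq
    have j1 := jet_pd hU ((hH₁ k m).sub (hH₂ k m)) (hjd k m) j
    have j2 := jet_pd hU ((hH₁ j m).sub (hH₂ j m)) (hjd j m) k
    have j3 := jet_pd hU ((hH₁ j k).sub (hH₂ j k)) (hjd j k) m
    have c1 := contDiffOn_pd (j := j) hU ((hH₁ k m).sub (hH₂ k m))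
    have c2 := contDiffOn_pd (j := k) hU ((hH₁ j m).sub (hH₂ j m))
    have c3 := contDiffOn_pd (j := m) hU ((hH₁ j k).sub (hH₂ j k))
    exact jet_sub hU (c1.add c2) c3 (jet_add hU c1 c2 j1 j2) j3
  have heq2 : Set.EqOn
      (fun x => (1/2 : ℝ) * ∑ m, (ginv H₁ x l m * b₁ m x - ginv H₂ x l m * b₂ m x))
      (fun x => christoffel H₁ l j k x - christoffel H₂ l j k x) U := by
    intro x _
    show (1/2 : ℝ) * ∑ m, (ginv H₁ x l m * b₁ m x - ginv H₂ x l m * b₂ m x) = _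
    unfold christoffel
    rw [Finset.sum_sub_distrib]
    ring
  apply jet_congr hU heq2
  apply jet_const_mul hU
  · apply ContDiffOn.sum
    intro m _
    exact ((cd_ginv hU hH₁ hdet₁ l m).mul (hb₁c m)).sub
      ((cd_ginv hU hH₂ hdet₂ l m).mul (hb₂c m))
  · apply jet_sum hU
    · intro m _
      exact ((cd_ginv hU hH₁ hdet₁ l m).mul (hb₁c m)).sub
        ((cd_ginv hU hH₂ hdet₂ l m).mul (hb₂c m))
    · intro m _
      exact jet_mul_sub hU (cd_ginv hU hH₁ hdet₁ l m) (cd_ginv hU hH₂ hdet₂ l m)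
        (hb₁c m) (hb₂c m) (jet_ginv_diff hU hH₁ hH₂ hdet₁ hdet₂ hjd l m) (hdb m)

theorem jet_riemann_diff (l i j k : Fin N) :
    Jet U ν (fun x => riemann H₁ l i j k x - riemann H₂ l i j k x) := by
  have cΓ₁ : ∀ a b c : Fin N, ContDiffOn ℝ (⊤ : ℕ∞) (christoffel H₁ a b c) U :=
    fun a b c => cd_christoffel hU hH₁ hdet₁ a b c
  have cΓ₂ : ∀ a b c : Fin N, ContDiffOn ℝ (⊤ : ℕ∞) (christoffel H₂ a b c) U :=
    fun a b c => cd_christoffel hU hH₂ hdet₂ a b c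
  have jΓ : ∀ a b c : Fin N,
      Jet U ν (fun x => christoffel H₁ a b c x - christoffel H₂ a b c x) :=
    fun a b c => jet_christoffel_diff hU hH₁ hH₂ hdet₁ hdet₂ hjd a b c
  -- pieces
  have jp1 : Jet U ν (fun x => pd (christoffel H₁ l j k) i x - pd (christoffel H₂ l j k) i x) := by
    have heq : Set.EqOn (pd (fun x => christoffel H₁ l j k x - christoffel H₂ l j k x) i)
        (fun x => pd (christoffel H₁ l j k) i x - pd (christoffel H₂ l j k) i x) U := by
      intro x hx
      exact pd_sub (diffAt_of_cd hU (cΓ₁ l j k) hx) (diffAt_of_cd hU (cΓ₂ l j k) hx)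
    exact jet_congr hU heq (jet_pd hU ((cΓ₁ l j k).sub (cΓ₂ l j k)) (jΓ l j k) i)
  have jp2 : Jet U ν (fun x => pd (christoffel H₁ l i k) j x - pd (christoffel H₂ l i k) j x) := by
    have heq : Set.EqOn (pd (fun x => christoffel H₁ l i k x - christoffel H₂ l i k x) j)
        (fun x => pd (christoffel H₁ l i k) j x - pd (christoffel H₂ l i k) j x) U := by
      intro x hx
      exact pd_sub (diffAt_of_cd hU (cΓ₁ l i k) hx) (diffAt_of_cd hU (cΓ₂ l i k) hx)
    exact jet_congr hU heq (jet_pd hU ((cΓ₁ l i k).sub (cΓ₂ l i k)) (jΓ l i k) j)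
  have jp3 : Jet U ν (fun x => (∑ m, christoffel H₁ l i m x * christoffel H₁ m j k x)
      - ∑ m, christoffel H₂ l i m x * christoffel H₂ m j k x) := by
    have heq : Set.EqOn (fun x => ∑ m, (christoffel H₁ l i m x * christoffel H₁ m j k x
        - christoffel H₂ l i m x * christoffel H₂ m j k x))
        (fun x => (∑ m, christoffel H₁ l i m x * christoffel H₁ m j k x)
          - ∑ m, christoffel H₂ l i m x * christoffel H₂ m j k x) U := by
      intro x _; exact Finset.sum_sub_distrib _ _
    apply jet_congr hU heq
    apply jet_sum hU
    · intro m _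
      exact ((cΓ₁ l i m).mul (cΓ₁ m j k)).sub ((cΓ₂ l i m).mul (cΓ₂ m j k))
    · intro m _
      exact jet_mul_sub hU (cΓ₁ l i m) (cΓ₂ l i m) (cΓ₁ m j k) (cΓ₂ m j k)
        (jΓ l i m) (jΓ m j k)
  have jp4 : Jet U ν (fun x => (∑ m, christoffel H₁ l j m x * christoffel H₁ m i k x)
      - ∑ m, christoffel H₂ l j m x * christoffel H₂ m i k x) := by
    have heq : Set.EqOn (fun x => ∑ m, (christoffel H₁ l j m x * christoffel H₁ m i k x
        - christoffel H₂ l j m x * christoffel H₂ m i k x))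
        (fun x => (∑ m, christoffel H₁ l j m x * christoffel H₁ m i k x)
          - ∑ m, christoffel H₂ l j m x * christoffel H₂ m i k x) U := by
      intro x _; exact Finset.sum_sub_distrib _ _
    apply jet_congr hU heq
    apply jet_sum hU
    · intro m _
      exact ((cΓ₁ l j m).mul (cΓ₁ m i k)).sub ((cΓ₂ l j m).mul (cΓ₂ m i k))
    · intro m _
      exact jet_mul_sub hU (cΓ₁ l j m) (cΓ₂ l j m) (cΓ₁ m i k) (cΓ₂ m i k)
        (jΓ l j m) (jΓ m i k)
  -- smoothness of pieces
  have c1 : ContDiffOn ℝ (⊤ : ℕ∞) (fun x => pd (christoffel H₁ l j k) i x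
      - pd (christoffel H₂ l j k) i x) U :=
    (contDiffOn_pd hU (cΓ₁ l j k)).sub (contDiffOn_pd hU (cΓ₂ l j k))
  have c2 : ContDiffOn ℝ (⊤ : ℕ∞) (fun x => pd (christoffel H₁ l i k) j x
      - pd (christoffel H₂ l i k) j x) U :=
    (contDiffOn_pd hU (cΓ₁ l i k)).sub (contDiffOn_pd hU (cΓ₂ l i k))
  have c3 : ContDiffOn ℝ (⊤ : ℕ∞) (fun x => (∑ m, christoffel H₁ l i m x * christoffel H₁ m j k x)
      - ∑ m, christoffel H₂ l i m x * christoffel H₂ m j k x) U :=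
    (ContDiffOn.sum (fun m _ => (cΓ₁ l i m).mul (cΓ₁ m j k))).sub
      (ContDiffOn.sum (fun m _ => (cΓ₂ l i m).mul (cΓ₂ m j k)))
  have c4 : ContDiffOn ℝ (⊤ : ℕ∞) (fun x => (∑ m, christoffel H₁ l j m x * christoffel H₁ m i k x)
      - ∑ m, christoffel H₂ l j m x * christoffel H₂ m i k x) U :=
    (ContDiffOn.sum (fun m _ => (cΓ₁ l j m).mul (cΓ₁ m i k))).sub
      (ContDiffOn.sum (fun m _ => (cΓ₂ l j m).mul (cΓ₂ m i k)))
  have heqf : Set.EqOn (fun x =>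
      ((fun x => pd (christoffel H₁ l j k) i x - pd (christoffel H₂ l j k) i x) x
        - (fun x => pd (christoffel H₁ l i k) j x - pd (christoffel H₂ l i k) j x) x)
      + (((fun x => (∑ m, christoffel H₁ l i m x * christoffel H₁ m j k x)
          - ∑ m, christoffel H₂ l i m x * christoffel H₂ m j k x) x)
        - ((fun x => (∑ m, christoffel H₁ l j m x * christoffel H₁ m i k x)
          - ∑ m, christoffel H₂ l j m x * christoffel H₂ m i k x) x)))
      (fun x => riemann H₁ l i j k x - riemann H₂ l i j k x) U := by
    intro x _
    unfold riemann
    simp only []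
    ring
  apply jet_congr hU heqf
  exact jet_add hU (c1.sub c2) (c3.sub c4)
    (jet_sub hU c1 c2 jp1 jp2) (jet_sub hU c3 c4 jp3 jp4)

theorem jet_scalar_diff :
    Jet U ν (fun x => scalarCurvature H₁ x - scalarCurvature H₂ x) := by
  have cR₁ : ∀ j k : Fin N, ContDiffOn ℝ (⊤ : ℕ∞) (fun x => ∑ i, riemann H₁ i i j k x) U :=
    fun j k => ContDiffOn.sum (fun i _ => cd_riemann hU hH₁ hdet₁ i i j k)
  have cR₂ : ∀ j k : Fin N, ContDiffOn ℝ (⊤ : ℕ∞) (fun x => ∑ i, riemann H₂ i i j k x) U :=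
    fun j k => ContDiffOn.sum (fun i _ => cd_riemann hU hH₂ hdet₂ i i j k)
  have jR : ∀ j k : Fin N, Jet U ν (fun x => (∑ i, riemann H₁ i i j k x)
      - ∑ i, riemann H₂ i i j k x) := by
    intro j k
    have heq : Set.EqOn (fun x => ∑ i, (riemann H₁ i i j k x - riemann H₂ i i j k x))
        (fun x => (∑ i, riemann H₁ i i j k x) - ∑ i, riemann H₂ i i j k x) U := by
      intro x _; exact Finset.sum_sub_distrib _ _
    apply jet_congr hU heq
    apply jet_sum hU
    · intro i _
      exact (cd_riemann hU hH₁ hdet₁ i i j k).sub (cd_riemann hU hH₂ hdet₂ i i j k)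
    · intro i _
      exact jet_riemann_diff hU hH₁ hH₂ hdet₁ hdet₂ hjd i i j k
  have hterm : ∀ j k : Fin N, Jet U ν (fun x =>
      ginv H₁ x j k * (∑ i, riemann H₁ i i j k x)
        - ginv H₂ x j k * (∑ i, riemann H₂ i i j k x)) := by
    intro j k
    exact jet_mul_sub hU (cd_ginv hU hH₁ hdet₁ j k) (cd_ginv hU hH₂ hdet₂ j k)
      (cR₁ j k) (cR₂ j k) (jet_ginv_diff hU hH₁ hH₂ hdet₁ hdet₂ hjd j k) (jR j k)
  have heq2 : Set.EqOn (fun x => ∑ j, ∑ k,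
      (ginv H₁ x j k * (∑ i, riemann H₁ i i j k x)
        - ginv H₂ x j k * (∑ i, riemann H₂ i i j k x)))
      (fun x => scalarCurvature H₁ x - scalarCurvature H₂ x) U := by
    intro x _
    show _ = scalarCurvature H₁ x - scalarCurvature H₂ x
    unfold scalarCurvature
    rw [← Finset.sum_sub_distrib]
    apply Finset.sum_congr rfl
    intro j _
    exact Finset.sum_sub_distrib _ _
  apply jet_congr hU heq2
  apply jet_sum hU
  · intro j _
    apply ContDiffOn.sum
    intro k _
    exact ((cd_ginv hU hH₁ hdet₁ j k).mul (cR₁ j k)).sub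
      ((cd_ginv hU hH₂ hdet₂ j k).mul (cR₂ j k))
  · intro j _
    apply jet_sum hU
    · intro k _
      exact ((cd_ginv hU hH₁ hdet₁ j k).mul (cR₁ j k)).sub
        ((cd_ginv hU hH₂ hdet₂ j k).mul (cR₂ j k))
    · intro k _
      exact hterm j k

theorem jet_Qop_diff {f : Vec N → ℝ} (hf : ContDiffOn ℝ (⊤ : ℕ∞) f U) :
    Jet U ν (fun x => Qop ν H₁ f x - Qop ν H₂ f x) := by
  set X : Fin N → Fin N → Vec N → ℝ := fun j k x =>
    if j = ν ∧ k = ν then 0 else pd (pd f j) k x with hX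
  have cX : ∀ j k, ContDiffOn ℝ (⊤ : ℕ∞) (X j k) U := by
    intro j k
    by_cases h : j = ν ∧ k = ν
    · have : X j k = fun _ => (0:ℝ) := by funext x; rw [hX]; simp [h]
      rw [this]; exact contDiffOn_const
    · have : X j k = pd (pd f j) k := by funext x; rw [hX]; simp [h]
      rw [this]; exact contDiffOn_pd hU (contDiffOn_pd hU hf)
  set B : (Vec N → Matrix (Fin N) (Fin N) ℝ) → Fin N → Fin N → Vec N → ℝ :=
    fun H j k x => X j k x - ∑ l, christoffel H l j k x * pd f l x with hB
  have cB₁ : ∀ j k, ContDiffOn ℝ (⊤ : ℕ∞) (B H₁ j k) U := fun j k =>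
    (cX j k).sub (ContDiffOn.sum (fun l _ =>
      (cd_christoffel hU hH₁ hdet₁ l j k).mul (contDiffOn_pd hU hf)))
  have cB₂ : ∀ j k, ContDiffOn ℝ (⊤ : ℕ∞) (B H₂ j k) U := fun j k =>
    (cX j k).sub (ContDiffOn.sum (fun l _ =>
      (cd_christoffel hU hH₂ hdet₂ l j k).mul (contDiffOn_pd hU hf)))
  have jB : ∀ j k, Jet U ν (fun x => B H₁ j k x - B H₂ j k x) := by
    intro j k
    have heq : Set.EqOn (fun x => ∑ l,
        (pd f l x * (christoffel H₂ l j k x - christoffel H₁ l j k x)))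
        (fun x => B H₁ j k x - B H₂ j k x) U := by
      intro x _
      calc ∑ l, pd f l x * (christoffel H₂ l j k x - christoffel H₁ l j k x)
          = ∑ l, (christoffel H₂ l j k x * pd f l x
              - christoffel H₁ l j k x * pd f l x) := by
            apply Finset.sum_congr rfl; intro l _; ring
        _ = (∑ l, christoffel H₂ l j k x * pd f l x)
            - ∑ l, christoffel H₁ l j k x * pd f l x := Finset.sum_sub_distrib _ _
        _ = B H₁ j k x - B H₂ j k x := by
            show _ = (X j k x - ∑ l, christoffel H₁ l j k x * pd f l x)
              - (X j k x - ∑ l, christoffel H₂ l j k x * pd f l x)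
            ring
    apply jet_congr hU heq
    apply jet_sum hU
    · intro l _
      exact (contDiffOn_pd hU hf).mul
        ((cd_christoffel hU hH₂ hdet₂ l j k).sub (cd_christoffel hU hH₁ hdet₁ l j k))
    · intro l _
      apply jet_mul' hU (contDiffOn_pd hU hf)
        ((cd_christoffel hU hH₂ hdet₂ l j k).sub (cd_christoffel hU hH₁ hdet₁ l j k))
      have h1 : Jet U ν (fun x => (-1) *
          (christoffel H₁ l j k x - christoffel H₂ l j k x)) :=
        jet_const_mul hU (-1)
          ((cd_christoffel hU hH₁ hdet₁ l j k).sub (cd_christoffel hU hH₂ hdet₂ l j k))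
          (jet_christoffel_diff hU hH₁ hH₂ hdet₁ hdet₂ hjd l j k)
      exact jet_congr hU (fun y _ => by ring) h1
  have jA : ∀ j k, Jet U ν (fun x =>
      (-(ginv H₁ x j k)) * B H₁ j k x - (-(ginv H₂ x j k)) * B H₂ j k x) := by
    intro j k
    apply jet_mul_sub hU (cd_ginv hU hH₁ hdet₁ j k).neg (cd_ginv hU hH₂ hdet₂ j k).neg
      (cB₁ j k) (cB₂ j k)
    · have h1 : Jet U ν (fun x => (-1) * (ginv H₁ x j k - ginv H₂ x j k)) :=
        jet_const_mul hU (-1)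
          ((cd_ginv hU hH₁ hdet₁ j k).sub (cd_ginv hU hH₂ hdet₂ j k))
          (jet_ginv_diff hU hH₁ hH₂ hdet₁ hdet₂ hjd j k)
      exact jet_congr hU (fun y _ => by ring) h1
    · exact jB j k
  have jC : Jet U ν (fun x =>
      (((N : ℝ) - 2) / (4 * ((N : ℝ) - 1))) * scalarCurvature H₁ x * f x
      - (((N : ℝ) - 2) / (4 * ((N : ℝ) - 1))) * scalarCurvature H₂ x * f x) := by
    have h1 : Jet U ν (fun x => f x * ((((N : ℝ) - 2) / (4 * ((N : ℝ) - 1))) *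
        (scalarCurvature H₁ x - scalarCurvature H₂ x))) :=
      jet_mul' hU hf
        (contDiffOn_const.mul ((cd_scalar hU hH₁ hdet₁).sub (cd_scalar hU hH₂ hdet₂)))
        (jet_const_mul hU _ ((cd_scalar hU hH₁ hdet₁).sub (cd_scalar hU hH₂ hdet₂))
          (jet_scalar_diff hU hH₁ hH₂ hdet₁ hdet₂ hjd))
    exact jet_congr hU (fun y _ => by ring) h1
  have cA₁ : ∀ j k, ContDiffOn ℝ (⊤ : ℕ∞) (fun x => (-(ginv H₁ x j k)) * B H₁ j k x) U :=
    fun j k => (cd_ginv hU hH₁ hdet₁ j k).neg.mul (cB₁ j k)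
  have cA₂ : ∀ j k, ContDiffOn ℝ (⊤ : ℕ∞) (fun x => (-(ginv H₂ x j k)) * B H₂ j k x) U :=
    fun j k => (cd_ginv hU hH₂ hdet₂ j k).neg.mul (cB₂ j k)
  have heqQ : Set.EqOn (fun x => (∑ j, ∑ k,
      ((-(ginv H₁ x j k)) * B H₁ j k x - (-(ginv H₂ x j k)) * B H₂ j k x))
      + ((((N : ℝ) - 2) / (4 * ((N : ℝ) - 1))) * scalarCurvature H₁ x * f x
        - (((N : ℝ) - 2) / (4 * ((N : ℝ) - 1))) * scalarCurvature H₂ x * f x))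
      (fun x => Qop ν H₁ f x - Qop ν H₂ f x) U := by
    intro x _
    have hsplit : (∑ j, ∑ k, ((-(ginv H₁ x j k)) * B H₁ j k x
        - (-(ginv H₂ x j k)) * B H₂ j k x))
        = (∑ j, ∑ k, (-(ginv H₁ x j k)) * B H₁ j k x)
          - (∑ j, ∑ k, (-(ginv H₂ x j k)) * B H₂ j k x) := by
      rw [← Finset.sum_sub_distrib]
      exact Finset.sum_congr rfl (fun j _ => Finset.sum_sub_distrib _ _)
    have hQ1 : Qop ν H₁ f x = (∑ j, ∑ k, (-(ginv H₁ x j k)) * B H₁ j k x)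
        + (((N : ℝ) - 2) / (4 * ((N : ℝ) - 1))) * scalarCurvature H₁ x * f x := rfl
    have hQ2 : Qop ν H₂ f x = (∑ j, ∑ k, (-(ginv H₂ x j k)) * B H₂ j k x)
        + (((N : ℝ) - 2) / (4 * ((N : ℝ) - 1))) * scalarCurvature H₂ x * f x := rfl
    show _ = Qop ν H₁ f x - Qop ν H₂ f x
    beta_reduce
    rw [hQ1, hQ2, hsplit]
    ring
  apply jet_congr hU heqQ
  apply jet_add hU
  · apply ContDiffOn.sum; intro j _
    apply ContDiffOn.sum; intro k _
    exact (cA₁ j k).sub (cA₂ j k)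
  · exact (contDiffOn_const.mul (cd_scalar hU hH₁ hdet₁)).mul hf |>.sub
      ((contDiffOn_const.mul (cd_scalar hU hH₂ hdet₂)).mul hf)
  · apply jet_sum hU
    · intro j _
      apply ContDiffOn.sum; intro k _
      exact (cA₁ j k).sub (cA₂ j k)
    · intro j _
      apply jet_sum hU
      · intro k _
        exact (cA₁ j k).sub (cA₂ j k)
      · intro k _
        exact jA j k
  · exact jC

end MetricDiff

section Analysis

variable {N : ℕ} {U : Set (Vec N)} {ν : Fin N}

theorem vanish_on_halfspace (hU : IsOpen U) {F : Vec N → ℝ} (hF : ContinuousOn F U)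
    (h0 : ∀ x ∈ U, 0 < x ν → F x = 0) : ∀ x ∈ U, 0 ≤ x ν → F x = 0 := by
  intro p hp hp0
  rcases eq_or_lt_of_le hp0 with h | h
  swap
  · exact h0 p hp h
  -- boundary point, p ν = 0 (h : 0 = p ν)
  set c : ℝ → Vec N := fun t => p + t • (Pi.single ν (1:ℝ) : Vec N) with hc
  have hccont : Continuous c := by continuity
  have hc0 : c 0 = p := by simp [hc]
  have hcν : ∀ t, c t ν = t := by
    intro t
    show p ν + t * (Pi.single ν (1:ℝ) : Vec N) ν = t
    rw [Pi.single_eq_same, ← h]; ring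
  have hmemU : ∀ᶠ t in nhds (0:ℝ), c t ∈ U :=
    hccont.continuousAt.preimage_mem_nhds (by rw [hc0]; exact hU.mem_nhds hp)
  have htend : Filter.Tendsto c (nhdsWithin 0 (Set.Ioi 0)) (nhdsWithin p U) := by
    rw [tendsto_nhdsWithin_iff]
    constructor
    · have := hccont.continuousAt (x := (0:ℝ))
      rw [ContinuousAt, hc0] at this
      exact this.mono_left nhdsWithin_le_nhds
    · exact nhdsWithin_le_nhds hmemU
  have hW : Filter.Tendsto (F ∘ c) (nhdsWithin 0 (Set.Ioi 0)) (nhds (F p)) :=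
    (hF p hp).tendsto.comp htend
  have hzero : (F ∘ c) =ᶠ[nhdsWithin 0 (Set.Ioi 0)] (fun _ => 0) := by
    filter_upwards [nhdsWithin_le_nhds hmemU, self_mem_nhdsWithin] with t ht ht'
    exact h0 (c t) ht (by rw [hcν]; exact ht')
  have hW' : Filter.Tendsto (F ∘ c) (nhdsWithin 0 (Set.Ioi 0)) (nhds 0) := by
    rw [Filter.tendsto_congr' hzero]; exact tendsto_const_nhds
  exact tendsto_nhds_unique hW hW'

theorem Qop_sub (hU : IsOpen U) {g : Vec N → Matrix (Fin N) (Fin N) ℝ}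
    {f₁ f₂ : Vec N → ℝ} (hf₁ : ContDiffOn ℝ (⊤ : ℕ∞) f₁ U)
    (hf₂ : ContDiffOn ℝ (⊤ : ℕ∞) f₂ U) :
    Set.EqOn (Qop ν g (fun y => f₁ y - f₂ y))
      (fun x => Qop ν g f₁ x - Qop ν g f₂ x) U := by
  intro x hx
  have hD1 : ∀ l : Fin N, pd (fun y => f₁ y - f₂ y) l x = pd f₁ l x - pd f₂ l x :=
    fun l => pd_sub (diffAt_of_cd hU hf₁ hx) (diffAt_of_cd hU hf₂ hx)
  have hD2 : ∀ j k : Fin N, pd (pd (fun y => f₁ y - f₂ y) j) k x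
      = pd (pd f₁ j) k x - pd (pd f₂ j) k x := by
    intro j k
    have heq : Set.EqOn (pd (fun y => f₁ y - f₂ y) j)
        (fun y => pd f₁ j y - pd f₂ j y) U := fun y hy =>
      pd_sub (diffAt_of_cd hU hf₁ hy) (diffAt_of_cd hU hf₂ hy)
    rw [pd_eqOn hU heq hx]
    exact pd_sub (diffAt_of_cd hU (contDiffOn_pd hU hf₁) hx)
      (diffAt_of_cd hU (contDiffOn_pd hU hf₂) hx)
  show Qop ν g (fun y => f₁ y - f₂ y) x = Qop ν g f₁ x - Qop ν g f₂ x
  unfold Qop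
  have hterm : ∀ j k : Fin N, (-(ginv g x j k)) *
      ((if j = ν ∧ k = ν then 0 else pd (pd (fun y => f₁ y - f₂ y) j) k x)
        - ∑ l, christoffel g l j k x * pd (fun y => f₁ y - f₂ y) l x)
      = (-(ginv g x j k)) * ((if j = ν ∧ k = ν then 0 else pd (pd f₁ j) k x)
          - ∑ l, christoffel g l j k x * pd f₁ l x)
        - (-(ginv g x j k)) * ((if j = ν ∧ k = ν then 0 else pd (pd f₂ j) k x)
          - ∑ l, christoffel g l j k x * pd f₂ l x) := by
    intro j k
    have hsum : (∑ l, christoffel g l j k x * pd (fun y => f₁ y - f₂ y) l x)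
        = (∑ l, christoffel g l j k x * pd f₁ l x)
          - ∑ l, christoffel g l j k x * pd f₂ l x := by
      rw [← Finset.sum_sub_distrib]
      apply Finset.sum_congr rfl
      intro l _
      rw [hD1 l]; ring
    rw [hsum]
    by_cases h : j = ν ∧ k = ν
    · simp only [if_pos h]; ring
    · simp only [if_neg h]
      rw [hD2 j k]; ring
  have hsplit : (∑ j, ∑ k : Fin N, (-(ginv g x j k)) *
      ((if j = ν ∧ k = ν then 0 else pd (pd (fun y => f₁ y - f₂ y) j) k x)
        - ∑ l, christoffel g l j k x * pd (fun y => f₁ y - f₂ y) l x))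
      = (∑ j, ∑ k : Fin N, (-(ginv g x j k)) *
          ((if j = ν ∧ k = ν then 0 else pd (pd f₁ j) k x)
            - ∑ l, christoffel g l j k x * pd f₁ l x))
        - (∑ j, ∑ k : Fin N, (-(ginv g x j k)) *
          ((if j = ν ∧ k = ν then 0 else pd (pd f₂ j) k x)
            - ∑ l, christoffel g l j k x * pd f₂ l x)) := by
    rw [← Finset.sum_sub_distrib]
    apply Finset.sum_congr rfl
    intro j _
    rw [← Finset.sum_sub_distrib]
    apply Finset.sum_congr rfl
    intro k _
    exact hterm j k
  rw [hsplit]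
  ring

end Analysis

section FinJet

variable {N : ℕ} {U : Set (Vec N)} {ν : Fin N}

theorem finjet_Qop (hU : IsOpen U) {H : Vec N → Matrix (Fin N) (Fin N) ℝ}
    (hH : ∀ a b, ContDiffOn ℝ (⊤ : ℕ∞) (fun x => H x a b) U)
    (hdet : ∀ x ∈ U, (H x).det ≠ 0)
    {D : Vec N → ℝ} (hD : ContDiffOn ℝ (⊤ : ℕ∞) D U) (m : ℕ)
    (hind : ∀ i ≤ m + 1, ∀ q ∈ U, q ν = 0 → pdIter D ν i q = 0) :
    ∀ p ∈ U, p ν = 0 → pdIter (Qop ν H D) ν m p = 0 := by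
  intro p hp hp0
  -- first-derivative factors
  have hA : ∀ l : Fin N, l ≠ ν → ∀ i ≤ m + 1, ∀ q ∈ U, q ν = 0 →
      pdIter (pd D l) ν i q = 0 := by
    intro l hl i hi q hq hq0
    rw [pdIter_comm hU hD i q hq]
    exact pd_tangent_zero hU (fun r hr hr0 => hind i hi r hr hr0) hl hq hq0
  have hB : ∀ i ≤ m, ∀ q ∈ U, q ν = 0 → pdIter (pd D ν) ν i q = 0 := by
    intro i hi q hq hq0
    rw [congrFun (pdIter_shift i) q]
    exact hind (i+1) (by omega) q hq hq0
  have hpdD : ∀ l : Fin N, ∀ i ≤ m, ∀ q ∈ U, q ν = 0 → pdIter (pd D l) ν i q = 0 := by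
    intro l i hi q hq hq0
    by_cases hl : l = ν
    · subst hl; exact hB i hi q hq hq0
    · exact hA l hl i (by omega) q hq hq0
  -- second-derivative factors
  have hX : ∀ j k : Fin N, ¬(j = ν ∧ k = ν) → ∀ i ≤ m, ∀ q ∈ U, q ν = 0 →
      pdIter (pd (pd D j) k) ν i q = 0 := by
    intro j k hjk i hi q hq hq0
    by_cases hk : k = ν
    · have hj : j ≠ ν := fun hj => hjk ⟨hj, hk⟩
      subst hk
      rw [congrFun (pdIter_shift i) q]
      exact hA j hj (i+1) (by omega) q hq hq0
    · rw [pdIter_comm hU (contDiffOn_pd hU hD) i q hq]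
      refine pd_tangent_zero hU ?_ hk hq hq0
      intro r hr hr0
      by_cases hj : j = ν
      · subst hj; exact hB i hi r hr hr0
      · exact hA j hj i (by omega) r hr hr0
  -- smoothness of pieces
  have cXf : ∀ j k : Fin N, ContDiffOn ℝ (⊤ : ℕ∞)
      (fun x => if j = ν ∧ k = ν then (0:ℝ) else pd (pd D j) k x) U := by
    intro j k
    by_cases h : j = ν ∧ k = ν
    · simp only [if_pos h]; exact contDiffOn_const
    · simp only [if_neg h]; exact contDiffOn_pd hU (contDiffOn_pd hU hD)
  have cT1 : ∀ j k : Fin N, ContDiffOn ℝ (⊤ : ℕ∞) (fun x => (-(ginv H x j k)) *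
      (if j = ν ∧ k = ν then (0:ℝ) else pd (pd D j) k x)) U := fun j k =>
    (cd_ginv hU hH hdet j k).neg.mul (cXf j k)
  have cT2 : ∀ j k l : Fin N, ContDiffOn ℝ (⊤ : ℕ∞)
      (fun x => (ginv H x j k * christoffel H l j k x) * pd D l x) U := fun j k l =>
    ((cd_ginv hU hH hdet j k).mul (cd_christoffel hU hH hdet l j k)).mul
      (contDiffOn_pd hU hD)
  have cInner : ∀ j k : Fin N, ContDiffOn ℝ (⊤ : ℕ∞) (fun x => (-(ginv H x j k)) *
      (if j = ν ∧ k = ν then (0:ℝ) else pd (pd D j) k x)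
      + ∑ l, (ginv H x j k * christoffel H l j k x) * pd D l x) U := fun j k =>
    (cT1 j k).add (ContDiffOn.sum (fun l _ => cT2 j k l))
  -- vanishing of each simple product at order m
  have hT1 : ∀ j k : Fin N, pdIter (fun x => (-(ginv H x j k)) *
      (if j = ν ∧ k = ν then (0:ℝ) else pd (pd D j) k x)) ν m p = 0 := by
    intro j k
    by_cases h : j = ν ∧ k = ν
    · have heq : Set.EqOn (fun x => (-(ginv H x j k)) *
          (if j = ν ∧ k = ν then (0:ℝ) else pd (pd D j) k x)) (fun _ => (0:ℝ)) U := by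
        intro x _; simp [if_pos h]
      rw [pdIter_eqOn hU heq m hp, pdIter_zero_fun]
    · have heq : Set.EqOn (fun x => (-(ginv H x j k)) *
          (if j = ν ∧ k = ν then (0:ℝ) else pd (pd D j) k x))
          (fun x => (-(ginv H x j k)) * pd (pd D j) k x) U := by
        intro x _; simp [if_neg h]
      rw [pdIter_eqOn hU heq m hp]
      exact jet_mul hU m _ _ (cd_ginv hU hH hdet j k).neg
        (contDiffOn_pd hU (contDiffOn_pd hU hD)) (fun i hi => hX j k h i hi) p hp hp0
  have hT2 : ∀ j k l : Fin N, pdIter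
      (fun x => (ginv H x j k * christoffel H l j k x) * pd D l x) ν m p = 0 := by
    intro j k l
    exact jet_mul hU m _ _ ((cd_ginv hU hH hdet j k).mul (cd_christoffel hU hH hdet l j k))
      (contDiffOn_pd hU hD) (fun i hi => hpdD l i hi) p hp hp0
  have hT3 : pdIter (fun x => ((((N : ℝ) - 2) / (4 * ((N : ℝ) - 1)))
      * scalarCurvature H x) * D x) ν m p = 0 :=
    jet_mul hU m _ _ (contDiffOn_const.mul (cd_scalar hU hH hdet)) hD
      (fun i hi => hind i (by omega)) p hp hp0
  -- put it together
  have heqQ : Set.EqOn (Qop ν H D) (fun x => (∑ j, ∑ k : Fin N,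
      ((-(ginv H x j k)) * (if j = ν ∧ k = ν then (0:ℝ) else pd (pd D j) k x)
        + ∑ l, (ginv H x j k * christoffel H l j k x) * pd D l x))
      + ((((N : ℝ) - 2) / (4 * ((N : ℝ) - 1))) * scalarCurvature H x) * D x) U := by
    intro x _
    show Qop ν H D x = _
    unfold Qop
    congr 1
    · apply Finset.sum_congr rfl
      intro j _
      apply Finset.sum_congr rfl
      intro k _
      have e1 : (∑ l, (ginv H x j k * christoffel H l j k x) * pd D l x)
          = ginv H x j k * ∑ l, christoffel H l j k x * pd D l x := by
        rw [Finset.mul_sum]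
        apply Finset.sum_congr rfl
        intro l _
        ring
      rw [e1]
      ring
  rw [pdIter_eqOn hU heqQ m hp]
  rw [pdIter_add hU (by
      apply ContDiffOn.sum; intro j _; apply ContDiffOn.sum; intro k _; exact cInner j k)
    ((contDiffOn_const.mul (cd_scalar hU hH hdet)).mul hD) m p hp]
  rw [hT3, add_zero]
  rw [pdIter_sum hU Finset.univ _ (fun j _ => by
      apply ContDiffOn.sum; intro k _; exact cInner j k) m p hp]
  apply Finset.sum_eq_zero
  intro j _
  rw [pdIter_sum hU Finset.univ _ (fun k _ => cInner j k) m p hp]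
  apply Finset.sum_eq_zero
  intro k _
  rw [pdIter_add hU (cT1 j k) (ContDiffOn.sum (fun l _ => cT2 j k l)) m p hp]
  rw [hT1 j k]
  rw [pdIter_sum hU Finset.univ _ (fun l _ => cT2 j k l) m p hp]
  rw [Finset.sum_eq_zero (fun l _ => hT2 j k l)]
  ring

end FinJet


/-- if two metrics in boundary normal form `H_i = dx_n² + h_i` on an open set
`U` meeting the boundary `{x^{last} = 0}` of the upper half-space (dimension `n+1`) agree to
infinite order in the normal direction on `Γ = U ∩ {x^{last} = 0}`, and `f_1, f_2` solve
`L_{H_i} f_i = 0` in the interior part of `U` with the same Cauchy data on `Γ`, then `f_1`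
and `f_2` agree to infinite order in the normal direction on `Γ`. -/
theorem solutions_agree_to_infinite_order
    (n : ℕ) (U : Set (Vec (n+1))) (hU : IsOpen U)
    (H₁ H₂ : Vec (n+1) → Matrix (Fin (n+1)) (Fin (n+1)) ℝ)
    (hH₁ : ∀ j k, ContDiffOn ℝ (⊤ : ℕ∞) (fun x => H₁ x j k) U)
    (hH₂ : ∀ j k, ContDiffOn ℝ (⊤ : ℕ∞) (fun x => H₂ x j k) U)
    (hsymm : ∀ x ∈ U, (H₁ x).IsSymm ∧ (H₂ x).IsSymm)
    (hpos : ∀ x ∈ U, (H₁ x).PosDef ∧ (H₂ x).PosDef)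
    (hform₁ : ∀ x ∈ U, ∀ j : Fin (n+1),
      H₁ x j (Fin.last n) = if j = Fin.last n then 1 else 0)
    (hform₂ : ∀ x ∈ U, ∀ j : Fin (n+1),
      H₂ x j (Fin.last n) = if j = Fin.last n then 1 else 0)
    (hjets : ∀ (m : ℕ) (j k : Fin (n+1)), ∀ p ∈ U, p (Fin.last n) = 0 →
      pdIter (fun x => H₁ x j k - H₂ x j k) (Fin.last n) m p = 0)
    (f₁ f₂ : Vec (n+1) → ℝ)
    (hf₁ : ContDiffOn ℝ (⊤ : ℕ∞) f₁ U) (hf₂ : ContDiffOn ℝ (⊤ : ℕ∞) f₂ U)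
    (heq₁ : ∀ x ∈ U, 0 < x (Fin.last n) → confLaplacian H₁ f₁ x = 0)
    (heq₂ : ∀ x ∈ U, 0 < x (Fin.last n) → confLaplacian H₂ f₂ x = 0)
    (hcauchy : ∀ p ∈ U, p (Fin.last n) = 0 →
      f₁ p = f₂ p ∧ pd f₁ (Fin.last n) p = pd f₂ (Fin.last n) p) :
    ∀ m : ℕ, ∀ p ∈ U, p (Fin.last n) = 0 →
      pdIter (fun x => f₁ x - f₂ x) (Fin.last n) m p = 0 := by
  set ν : Fin (n+1) := Fin.last n with hνdef
  set D : Vec (n+1) → ℝ := fun x => f₁ x - f₂ x with hDdef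
  have hdet₁ : ∀ x ∈ U, (H₁ x).det ≠ 0 := fun x hx => ne_of_gt (hpos x hx).1.det_pos
  have hdet₂ : ∀ x ∈ U, (H₂ x).det ≠ 0 := fun x hx => ne_of_gt (hpos x hx).2.det_pos
  have hjd : ∀ a b, Jet U ν (fun x => H₁ x a b - H₂ x a b) :=
    fun a b m' p hp hp0 => hjets m' a b p hp hp0
  have hDc : ContDiffOn ℝ (⊤ : ℕ∞) D U := hf₁.sub hf₂
  have hQ1c : ContDiffOn ℝ (⊤ : ℕ∞) (Qop ν H₁ f₁) U := cd_Qop hU hH₁ hdet₁ ν hf₁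
  have hQ2c : ContDiffOn ℝ (⊤ : ℕ∞) (Qop ν H₂ f₂) U := cd_Qop hU hH₂ hdet₂ ν hf₂
  have hQ12c : ContDiffOn ℝ (⊤ : ℕ∞) (Qop ν H₁ f₂) U := cd_Qop hU hH₁ hdet₁ ν hf₂
  have hQDc : ContDiffOn ℝ (⊤ : ℕ∞) (Qop ν H₁ D) U := cd_Qop hU hH₁ hdet₁ ν hDc
  have hpp₁ : ContDiffOn ℝ (⊤ : ℕ∞) (pd (pd f₁ ν) ν) U :=
    contDiffOn_pd hU (contDiffOn_pd hU hf₁)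
  have hpp₂ : ContDiffOn ℝ (⊤ : ℕ∞) (pd (pd f₂ ν) ν) U :=
    contDiffOn_pd hU (contDiffOn_pd hU hf₂)
  have hV₁ : ∀ x ∈ U, 0 ≤ x ν → pd (pd f₁ ν) ν x - Qop ν H₁ f₁ x = 0 := by
    apply vanish_on_halfspace hU
      ((hpp₁.sub hQ1c).continuousOn)
    intro x hx hxpos
    have hg1 : ginv H₁ x ν ν = 1 := ginv_last_entry H₁ ν (hdet₁ x hx) (hform₁ x hx)
    have hre := confLaplacian_eq_Qop H₁ f₁ x ν hg1
    rw [heq₁ x hx hxpos] at hre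
    linarith
  have hV₂ : ∀ x ∈ U, 0 ≤ x ν → pd (pd f₂ ν) ν x - Qop ν H₂ f₂ x = 0 := by
    apply vanish_on_halfspace hU
      ((hpp₂.sub hQ2c).continuousOn)
    intro x hx hxpos
    have hg2 : ginv H₂ x ν ν = 1 := ginv_last_entry H₂ ν (hdet₂ x hx) (hform₂ x hx)
    have hre := confLaplacian_eq_Qop H₂ f₂ x ν hg2
    rw [heq₂ x hx hxpos] at hre
    linarith
  have hkey₁ : ∀ m', ∀ q ∈ U, q ν = 0 →
      pdIter (pd (pd f₁ ν) ν) ν m' q = pdIter (Qop ν H₁ f₁) ν m' q := by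
    intro m' q hq hq0
    have h1 := pdIter_halfspace_zero hU hV₁ m' q hq (le_of_eq hq0.symm)
    have h2 := pdIter_sub (j := ν) hU hpp₁ hQ1c m' q hq
    rw [h2] at h1
    linarith
  have hkey₂ : ∀ m', ∀ q ∈ U, q ν = 0 →
      pdIter (pd (pd f₂ ν) ν) ν m' q = pdIter (Qop ν H₂ f₂) ν m' q := by
    intro m' q hq hq0
    have h1 := pdIter_halfspace_zero hU hV₂ m' q hq (le_of_eq hq0.symm)
    have h2 := pdIter_sub (j := ν) hU hpp₂ hQ2c m' q hq
    rw [h2] at h1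
    linarith
  intro m
  induction m using Nat.strong_induction_on with
  | _ m ih =>
    match m, ih with
    | 0, _ =>
      intro p hp hp0
      show f₁ p - f₂ p = 0
      rw [(hcauchy p hp hp0).1]; ring
    | 1, _ =>
      intro p hp hp0
      show pd D ν p = 0
      have h1 : pd D ν p = pd f₁ ν p - pd f₂ ν p :=
        pd_sub (diffAt_of_cd hU hf₁ hp) (diffAt_of_cd hU hf₂ hp)
      rw [h1, (hcauchy p hp hp0).2]; ring
    | (m+2), ih =>
      intro p hp hp0
      have hind : ∀ i ≤ m + 1, ∀ q ∈ U, q ν = 0 → pdIter D ν i q = 0 :=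
        fun i hi => ih i (by omega)
      have e1 : pdIter (pd (pd D ν) ν) ν m = pdIter D ν (m+2) := by
        rw [pdIter_shift m, pdIter_shift (m+1)]
      have heqD2 : Set.EqOn (pd (pd D ν) ν)
          (fun x => pd (pd f₁ ν) ν x - pd (pd f₂ ν) ν x) U := by
        intro x hx
        have heq : Set.EqOn (pd D ν) (fun y => pd f₁ ν y - pd f₂ ν y) U := fun y hy =>
          pd_sub (diffAt_of_cd hU hf₁ hy) (diffAt_of_cd hU hf₂ hy)
        rw [pd_eqOn hU heq hx]
        exact pd_sub (diffAt_of_cd hU (contDiffOn_pd hU hf₁) hx)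
          (diffAt_of_cd hU (contDiffOn_pd hU hf₂) hx)
      have heqQG : Set.EqOn (fun x => Qop ν H₁ f₁ x - Qop ν H₂ f₂ x)
          (fun x => Qop ν H₁ D x + (Qop ν H₁ f₂ x - Qop ν H₂ f₂ x)) U := by
        intro x hx
        have hx1 : Qop ν H₁ D x = Qop ν H₁ f₁ x - Qop ν H₁ f₂ x :=
          Qop_sub hU hf₁ hf₂ hx
        show Qop ν H₁ f₁ x - Qop ν H₂ f₂ x = Qop ν H₁ D x + (Qop ν H₁ f₂ x - Qop ν H₂ f₂ x)
        rw [hx1]; ring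
      have hG : pdIter (fun x => Qop ν H₁ f₂ x - Qop ν H₂ f₂ x) ν m p = 0 :=
        jet_Qop_diff hU hH₁ hH₂ hdet₁ hdet₂ hjd hf₂ m p hp hp0
      have hQD : pdIter (Qop ν H₁ D) ν m p = 0 :=
        finjet_Qop hU hH₁ hdet₁ hDc m hind p hp hp0
      calc pdIter D ν (m+2) p
          = pdIter (pd (pd D ν) ν) ν m p := by rw [e1]
        _ = pdIter (fun x => pd (pd f₁ ν) ν x - pd (pd f₂ ν) ν x) ν m p :=
            pdIter_eqOn hU heqD2 m hp
        _ = pdIter (pd (pd f₁ ν) ν) ν m p - pdIter (pd (pd f₂ ν) ν) ν m p :=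
            pdIter_sub hU hpp₁ hpp₂ m p hp
        _ = pdIter (Qop ν H₁ f₁) ν m p - pdIter (Qop ν H₂ f₂) ν m p := by
            rw [hkey₁ m p hp hp0, hkey₂ m p hp hp0]
        _ = pdIter (fun x => Qop ν H₁ f₁ x - Qop ν H₂ f₂ x) ν m p :=
            (pdIter_sub hU hQ1c hQ2c m p hp).symm
        _ = pdIter (fun x => Qop ν H₁ D x + (Qop ν H₁ f₂ x - Qop ν H₂ f₂ x)) ν m p :=
            pdIter_eqOn hU heqQG m hp
        _ = pdIter (Qop ν H₁ D) ν m p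
            + pdIter (fun x => Qop ν H₁ f₂ x - Qop ν H₂ f₂ x) ν m p :=
            pdIter_add hU hQDc (hQ12c.sub hQ2c) m p hp
        _ = 0 := by rw [hG, hQD]; ring
end Aux
end
end

section
/- Let $(M_1, g_1)$ and $(M_2, g_2)$ be Riemannian manifolds, $U_1 \subset M_1$, $U_2 \subset M_2$ open, and $J : U_1 \to U_2$ a diffeomorphism. Let $P_1, P_2$ be smooth positive functions on $U_1, U_2$ respectively and set $H_i(x,y) = G_i(x,y)/(P_i(x) P_i(y))$ where $G_i$ are functions on $U_i \times U_i$ off the diagonal satisfying the diagonal asymptotics $\lim_{y \to x} G_i(x,y)\, d_i(x,y)^{n-2} = c(n)$ with $c(n) = 1/((n-2)\omega_n)$, $n \geq 3$. If $H_1(x,y) = H_2(J(x), J(y))$ for all $x \neq y$ in $U_1$, then $J$ is conformal: $g_1 = c\, J^* g_2$ on $U_1$ with conformal factor $c(x) = \big( P_2(J(x)) / P_1(x) \big)^{4/(n-2)}$. -/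
open scoped BigOperators
open MeasureTheory

noncomputable section

variable {n : ℕ}

/-- Riemannian length of a path with respect to a metric `g` in coordinates. -/
def pathLength (g : Vec n → Matrix (Fin n) (Fin n) ℝ) (γ : ℝ → Vec n) : ℝ :=
  ∫ t in (0:ℝ)..1,
    Real.sqrt (∑ j, ∑ k, g (γ t) j k * deriv (fun s => γ s j) t * deriv (fun s => γ s k) t)

/-- Riemannian distance between `x` and `y` within the open set `U`: the infimum of
`g`-lengths of smooth paths from `x` to `y` staying in `U`. -/
def riemDistIn (g : Vec n → Matrix (Fin n) (Fin n) ℝ) (U : Set (Vec n)) (x y : Vec n) : ℝ :=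
  ⨅ γ : {γ : ℝ → Vec n // ContDiff ℝ (⊤ : ℕ∞) γ ∧ γ 0 = x ∧ γ 1 = y ∧
      ∀ t ∈ Set.Icc (0:ℝ) 1, γ t ∈ U},
    pathLength g γ.1

namespace SGC

/-- quadratic/bilinear form of a matrix -/
def quad (M : Matrix (Fin n) (Fin n) ℝ) (v w : Vec n) : ℝ := ∑ j, ∑ k, M j k * v j * w k

lemma quad_add_right (M : Matrix (Fin n) (Fin n) ℝ) (u v w : Vec n) :
    quad M u (v + w) = quad M u v + quad M u w := by
  simp [quad, Pi.add_apply, mul_add, Finset.sum_add_distrib]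

lemma quad_add_left (M : Matrix (Fin n) (Fin n) ℝ) (u v w : Vec n) :
    quad M (u + v) w = quad M u w + quad M v w := by
  simp only [quad, Pi.add_apply, mul_add, add_mul, Finset.sum_add_distrib]

lemma quad_sub_right (M : Matrix (Fin n) (Fin n) ℝ) (u v w : Vec n) :
    quad M u (v - w) = quad M u v - quad M u w := by
  simp only [quad, Pi.sub_apply, mul_sub, Finset.sum_sub_distrib]

lemma quad_smul_right (M : Matrix (Fin n) (Fin n) ℝ) (a : ℝ) (u w : Vec n) :
    quad M u (a • w) = a * quad M u w := by
  simp only [quad, Pi.smul_apply, smul_eq_mul, Finset.mul_sum]; congr 1; ext j; congr 1; ext k; ring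

lemma quad_smul_left (M : Matrix (Fin n) (Fin n) ℝ) (a : ℝ) (u w : Vec n) :
    quad M (a • u) w = a * quad M u w := by
  simp only [quad, Pi.smul_apply, smul_eq_mul, Finset.mul_sum]; congr 1; ext j; congr 1; ext k; ring

lemma quad_symm {M : Matrix (Fin n) (Fin n) ℝ} (hM : M.IsSymm) (v w : Vec n) :
    quad M v w = quad M w v := by
  rw [quad, Finset.sum_comm]
  congr 1; ext k; congr 1; ext j
  rw [← hM.apply k j]
  ring

lemma quad_eq_dot (M : Matrix (Fin n) (Fin n) ℝ) (v : Vec n) :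
    quad M v v = dotProduct v (M.mulVec v) := by
  simp only [quad, dotProduct, Matrix.mulVec, Finset.mul_sum]
  congr 1; ext j; congr 1; ext k; ring

lemma quad_pos {M : Matrix (Fin n) (Fin n) ℝ} (hM : M.PosDef) {v : Vec n} (hv : v ≠ 0) :
    0 < quad M v v := by
  rw [quad_eq_dot]
  have := hM.dotProduct_mulVec_pos hv
  simpa using this

lemma quad_nonneg {M : Matrix (Fin n) (Fin n) ℝ} (hM : M.PosDef) (v : Vec n) :
    0 ≤ quad M v v := by
  rcases eq_or_ne v 0 with rfl | hv
  · simp [quad]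
  · exact (quad_pos hM hv).le

/-- Cauchy–Schwarz for a symmetric positive-definite matrix. -/
lemma quad_CS {M : Matrix (Fin n) (Fin n) ℝ} (hM : M.PosDef) (hMs : M.IsSymm) (u w : Vec n) :
    quad M u w ≤ Real.sqrt (quad M u u) * Real.sqrt (quad M w w) := by
  rcases eq_or_ne u 0 with rfl | hu
  · simp [show quad M 0 w = 0 by simp [quad], show quad M (0:Vec n) 0 = 0 by simp [quad]]
  rcases le_or_gt (quad M u w) 0 with h | h
  · exact h.trans (mul_nonneg (Real.sqrt_nonneg _) (Real.sqrt_nonneg _))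
  · have hQu : 0 < quad M u u := quad_pos hM hu
    set t : ℝ := quad M u w / quad M u u with ht
    have key : 0 ≤ quad M (w - t • u) (w - t • u) := quad_nonneg hM _
    have hsub : ∀ a b : Vec n, quad M (a - b) (a - b)
        = quad M a a - quad M a b - (quad M b a - quad M b b) := by
      intro a b
      have h1 : quad M (a-b) (a-b) = quad M a (a-b) - quad M b (a-b) := by
        have h2 := quad_add_left M a (-b) (a-b)
        have h3 : quad M (-b) (a-b) = -quad M b (a-b) := by
          simpa using quad_smul_left M (-1) b (a-b)
        rw [h3] at h2
        simpa [sub_eq_add_neg] using h2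
      rw [h1, quad_sub_right, quad_sub_right]
    have expand : quad M (w - t • u) (w - t • u)
        = quad M w w - 2 * t * quad M u w + t ^ 2 * quad M u u := by
      rw [hsub, quad_smul_right, quad_smul_left, quad_smul_left, quad_smul_right,
        quad_symm hMs w u]
      ring
    have key2 : (quad M u w) ^ 2 ≤ quad M u u * quad M w w := by
      rw [expand, ht] at key
      have h4 : (0:ℝ) < quad M u u := hQu
      have e : quad M w w - 2 * (quad M u w / quad M u u) * quad M u w
          + (quad M u w / quad M u u) ^ 2 * quad M u u
          = quad M w w - (quad M u w)^2 / quad M u u := by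
        field_simp; ring
      rw [e] at key
      have h6 : (quad M u w)^2 / quad M u u ≤ quad M w w := by linarith
      calc (quad M u w)^2 = (quad M u w)^2 / quad M u u * quad M u u := by
            field_simp
        _ ≤ quad M w w * quad M u u := by
            exact mul_le_mul_of_nonneg_right h6 h4.le
        _ = quad M u u * quad M w w := mul_comm _ _
    calc quad M u w = Real.sqrt ((quad M u w)^2) := by
          rw [Real.sqrt_sq h.le]
      _ ≤ Real.sqrt (quad M u u * quad M w w) := Real.sqrt_le_sqrt key2
      _ = Real.sqrt (quad M u u) * Real.sqrt (quad M w w) := Real.sqrt_mul (quad_nonneg hM u) _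

lemma quad_continuous (M : Matrix (Fin n) (Fin n) ℝ) :
    Continuous fun v : Vec n => quad M v v := by
  unfold quad; fun_prop

lemma exists_mu (hn : 0 < n) {M : Matrix (Fin n) (Fin n) ℝ} (hM : M.PosDef) :
    ∃ μ : ℝ, 0 < μ ∧ ∀ v : Vec n, μ * ‖v‖^2 ≤ quad M v v := by
  haveI : Nonempty (Fin n) := ⟨⟨0, hn⟩⟩
  have hne : (Metric.sphere (0:Vec n) 1).Nonempty :=
    NormedSpace.sphere_nonempty.2 zero_le_one
  have hc : IsCompact (Metric.sphere (0:Vec n) 1) := isCompact_sphere _ _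
  obtain ⟨w₀, hw₀S, hw₀min⟩ := hc.exists_isMinOn hne (quad_continuous M).continuousOn
  have hw₀norm : ‖w₀‖ = 1 := by simpa using hw₀S
  have hw₀ne : w₀ ≠ 0 := by
    intro h; rw [h] at hw₀norm; simp at hw₀norm
  refine ⟨quad M w₀ w₀, quad_pos hM hw₀ne, ?_⟩
  intro v
  rcases eq_or_ne v 0 with rfl | hv
  · simp [quad]
  · have hvn : (0:ℝ) < ‖v‖ := norm_pos_iff.2 hv
    set u : Vec n := ‖v‖⁻¹ • v with hu
    have huS : u ∈ Metric.sphere (0:Vec n) 1 := by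
      simp [hu, norm_smul, abs_of_pos (inv_pos.2 hvn), inv_mul_cancel₀ hvn.ne']
    have hmin : quad M w₀ w₀ ≤ quad M u u := hw₀min huS
    have hq : quad M u u = ‖v‖⁻¹ ^ 2 * quad M v v := by
      rw [hu, quad_smul_left, quad_smul_right]; ring
    rw [hq] at hmin
    have h2 : quad M w₀ w₀ * ‖v‖^2 ≤ ‖v‖⁻¹ ^ 2 * quad M v v * ‖v‖^2 :=
      mul_le_mul_of_nonneg_right hmin (by positivity)
    calc quad M w₀ w₀ * ‖v‖^2 ≤ ‖v‖⁻¹ ^ 2 * quad M v v * ‖v‖^2 := h2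
      _ = quad M v v := by field_simp

lemma quad_lower_near {U : Set (Vec n)} (hU : IsOpen U) {g : Vec n → Matrix (Fin n) (Fin n) ℝ}
    (hg : ∀ j k, ContinuousOn (fun x => g x j k) U) {x : Vec n} (hx : x ∈ U)
    {δ : ℝ} (hδ : 0 < δ) :
    ∃ r > 0, Metric.closedBall x r ⊆ U ∧
      ∀ z ∈ Metric.closedBall x r, ∀ w : Vec n,
        quad (g x) w w - δ * ‖w‖^2 ≤ quad (g z) w w := by
  set F : Vec n → ℝ := fun z => ∑ j, ∑ k, |g z j k - g x j k| with hF
  have hFcont : ContinuousAt F x := by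
    apply tendsto_finset_sum; intro j _
    apply tendsto_finset_sum; intro k _
    exact (((hg j k).continuousAt (hU.mem_nhds hx)).sub continuousAt_const).abs
  have hFx : F x = 0 := by simp [hF]
  have hev : ∀ᶠ z in nhds x, F z < δ ∧ z ∈ U := by
    have hlt : F x < δ := by rw [hFx]; exact hδ
    filter_upwards [hFcont.eventually_lt continuousAt_const hlt,
      hU.mem_nhds hx] with z h1 h2
    exact ⟨h1, h2⟩
  obtain ⟨r, hr, hball⟩ := Metric.eventually_nhds_iff_ball.1 hev
  refine ⟨r/2, by positivity, ?_, ?_⟩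
  · intro z hz
    exact (hball z (lt_of_le_of_lt (Metric.mem_closedBall.1 hz) (by linarith))).2
  · intro z hz w
    have h3 := (hball z (lt_of_le_of_lt (Metric.mem_closedBall.1 hz) (by linarith))).1
    have h4 : |quad (g z) w w - quad (g x) w w| ≤ F z * ‖w‖^2 := by
      have : quad (g z) w w - quad (g x) w w
          = ∑ j, ∑ k, (g z j k - g x j k) * w j * w k := by
        simp only [quad, sub_mul, Finset.sum_sub_distrib]
      rw [this, hF, Finset.sum_mul]
      refine (Finset.abs_sum_le_sum_abs _ _).trans (Finset.sum_le_sum fun j _ => ?_)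
      rw [Finset.sum_mul]
      refine (Finset.abs_sum_le_sum_abs _ _).trans (Finset.sum_le_sum fun k _ => ?_)
      rw [abs_mul, abs_mul]
      have hwj : |w j| ≤ ‖w‖ := norm_le_pi_norm w j
      have hwk : |w k| ≤ ‖w‖ := norm_le_pi_norm w k
      calc |g z j k - g x j k| * |w j| * |w k|
          ≤ |g z j k - g x j k| * ‖w‖ * ‖w‖ := by
            apply mul_le_mul (mul_le_mul_of_nonneg_left hwj (abs_nonneg _)) hwk (abs_nonneg _)
            positivity
        _ = |g z j k - g x j k| * ‖w‖^2 := by ring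
    have h5 : quad (g x) w w - quad (g z) w w ≤ F z * ‖w‖^2 := by
      have := abs_le.1 h4
      linarith [this.1]
    have h6 : F z * ‖w‖^2 ≤ δ * ‖w‖^2 :=
      mul_le_mul_of_nonneg_right h3.le (by positivity)
    linarith


open Filter Set

lemma expNegInvGlue_monotone : Monotone expNegInvGlue := by
  intro x y hxy
  rcases le_or_gt y 0 with hy | hy
  · rw [expNegInvGlue.zero_of_nonpos (hxy.trans hy), expNegInvGlue.zero_of_nonpos hy]
  rcases le_or_gt x 0 with hx | hx
  · rw [expNegInvGlue.zero_of_nonpos hx]; exact (expNegInvGlue.pos_of_pos hy).le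
  · unfold expNegInvGlue
    rw [if_neg (not_le.2 hx), if_neg (not_le.2 hy)]
    apply Real.exp_le_exp.2
    have h1 : y⁻¹ ≤ x⁻¹ := by
      apply inv_anti₀ hx hxy
    linarith

lemma smoothTransition_monotone : Monotone Real.smoothTransition := by
  intro x y hxy
  unfold Real.smoothTransition
  rw [div_le_div_iff₀ (Real.smoothTransition.pos_denom x) (Real.smoothTransition.pos_denom y)]
  have h1 : expNegInvGlue x ≤ expNegInvGlue y := expNegInvGlue_monotone hxy
  have h2 : expNegInvGlue (1 - y) ≤ expNegInvGlue (1 - x) :=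
    expNegInvGlue_monotone (by linarith)
  nlinarith [expNegInvGlue.nonneg x, expNegInvGlue.nonneg y,
    expNegInvGlue.nonneg (1-x), expNegInvGlue.nonneg (1-y)]

lemma deriv_smoothTransition_nonneg (s : ℝ) : 0 ≤ deriv Real.smoothTransition s := by
  have hd : HasDerivAt Real.smoothTransition (deriv Real.smoothTransition s) s :=
    ((Real.smoothTransition.contDiff (n := 1)).differentiable (by simp) s).hasDerivAt
  rw [hasDerivAt_iff_tendsto_slope] at hd
  have h2 : Tendsto (slope Real.smoothTransition s) (nhdsWithin s (Set.Ioi s))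
      (nhds (deriv Real.smoothTransition s)) :=
    hd.mono_left (nhdsWithin_mono _ (fun t ht => ne_of_gt ht))
  refine ge_of_tendsto h2 ?_
  filter_upwards [self_mem_nhdsWithin] with t ht
  rw [slope_def_field]
  exact div_nonneg (sub_nonneg.2 (smoothTransition_monotone (le_of_lt ht)))
    (sub_nonneg.2 (le_of_lt ht))

/-- coordinatewise velocity of a path -/
def dv (γ : ℝ → Vec n) (t : ℝ) : Vec n := fun k => deriv (fun s => γ s k) t

lemma pathLength_eq (g : Vec n → Matrix (Fin n) (Fin n) ℝ) (γ : ℝ → Vec n) :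
    pathLength g γ = ∫ t in (0:ℝ)..1, Real.sqrt (quad (g (γ t)) (dv γ t) (dv γ t)) := rfl

lemma contDiff_coord {γ : ℝ → Vec n} (hγ : ContDiff ℝ (⊤ : ℕ∞) γ) (k : Fin n) :
    ContDiff ℝ (⊤ : ℕ∞) (fun s => γ s k) :=
  (ContinuousLinearMap.proj (R := ℝ) (φ := fun _ : Fin n => ℝ) k).contDiff.comp hγ

lemma dv_continuous {γ : ℝ → Vec n} (hγ : ContDiff ℝ (⊤ : ℕ∞) γ) (k : Fin n) :
    Continuous (fun t => dv γ t k) :=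
  (contDiff_coord hγ k).continuous_deriv (by norm_num)

lemma hasDerivAt_coord {γ : ℝ → Vec n} (hγ : ContDiff ℝ (⊤ : ℕ∞) γ) (t : ℝ) (k : Fin n) :
    HasDerivAt (fun s => γ s k) (dv γ t k) t :=
  ((contDiff_coord hγ k).differentiable (by norm_num) t).hasDerivAt

lemma continuous_quad_dv {M : Matrix (Fin n) (Fin n) ℝ} {u : Vec n} {γ : ℝ → Vec n}
    (hγ : ContDiff ℝ (⊤ : ℕ∞) γ) : Continuous (fun t => quad M u (dv γ t)) := by
  unfold quad
  apply continuous_finset_sum; intro j _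
  apply continuous_finset_sum; intro k _
  exact (continuous_const.mul (dv_continuous hγ k))

lemma integrand_contOn {U : Set (Vec n)} {g : Vec n → Matrix (Fin n) (Fin n) ℝ}
    (hg : ∀ j k, ContinuousOn (fun x => g x j k) U) {γ : ℝ → Vec n}
    (hγ : ContDiff ℝ (⊤ : ℕ∞) γ) {s : Set ℝ} (hin : ∀ t ∈ s, γ t ∈ U) :
    ContinuousOn (fun t => Real.sqrt (quad (g (γ t)) (dv γ t) (dv γ t))) s := by
  apply Real.continuous_sqrt.comp_continuousOn
  unfold quad
  apply continuousOn_finset_sum; intro j _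
  apply continuousOn_finset_sum; intro k _
  exact (((hg j k).comp hγ.continuous.continuousOn hin).mul
    (dv_continuous hγ j).continuousOn).mul (dv_continuous hγ k).continuousOn

lemma pathLength_nonneg {g : Vec n → Matrix (Fin n) (Fin n) ℝ} {γ : ℝ → Vec n} :
    0 ≤ pathLength g γ :=
  intervalIntegral.integral_nonneg zero_le_one (fun _ _ => Real.sqrt_nonneg _)

lemma riemDistIn_le {g : Vec n → Matrix (Fin n) (Fin n) ℝ} {U : Set (Vec n)} {x y : Vec n}
    (γ : {γ : ℝ → Vec n // ContDiff ℝ (⊤ : ℕ∞) γ ∧ γ 0 = x ∧ γ 1 = y ∧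
      ∀ t ∈ Set.Icc (0:ℝ) 1, γ t ∈ U}) :
    riemDistIn g U x y ≤ pathLength g γ.1 :=
  ciInf_le ⟨0, by rintro _ ⟨γ', rfl⟩; exact pathLength_nonneg⟩ γ

lemma segment_est {U : Set (Vec n)} {g : Vec n → Matrix (Fin n) (Fin n) ℝ}
    (hg : ∀ j k, ContinuousOn (fun x => g x j k) U)
    {x : Vec n} (hgx_pos : (g x).PosDef) (hgx_symm : (g x).IsSymm)
    {ε : ℝ} (hε0 : 0 ≤ ε) (hε1 : ε ≤ 1)
    {r : ℝ} (hball : Metric.closedBall x r ⊆ U)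
    (hcomp : ∀ z ∈ Metric.closedBall x r, ∀ w : Vec n,
      (1-ε) * quad (g x) w w ≤ quad (g z) w w)
    {γ : ℝ → Vec n} (hγ : ContDiff ℝ (⊤ : ℕ∞) γ)
    {T : ℝ} (hT0 : 0 ≤ T) (hT1 : T ≤ 1)
    (hγball : ∀ t ∈ Icc 0 T, γ t ∈ Metric.closedBall x r) :
    (1-ε) * Real.sqrt (quad (g x) (γ T - γ 0) (γ T - γ 0)) ≤
      ∫ t in (0:ℝ)..T, Real.sqrt (quad (g (γ t)) (dv γ t) (dv γ t)) := by
  set u : Vec n := γ T - γ 0 with hu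
  by_cases huz : u = 0
  · rw [huz]
    simp only [show quad (g x) (0:Vec n) 0 = 0 by simp [quad], Real.sqrt_zero, mul_zero]
    exact intervalIntegral.integral_nonneg hT0 (fun _ _ => Real.sqrt_nonneg _)
  have hQu : 0 < quad (g x) u u := quad_pos hgx_pos huz
  set Nu : ℝ := Real.sqrt (quad (g x) u u) with hNu
  have hNupos : 0 < Nu := Real.sqrt_pos.2 hQu
  -- pointwise estimate
  have hpoint : ∀ t ∈ Icc (0:ℝ) T,
      (1-ε) / Nu * quad (g x) u (dv γ t) ≤
        Real.sqrt (quad (g (γ t)) (dv γ t) (dv γ t)) := by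
    intro t ht
    set w : Vec n := dv γ t
    have hz := hγball t ht
    have h1 : (1-ε) * quad (g x) w w ≤ quad (g (γ t)) w w := hcomp _ hz w
    have hQw : 0 ≤ quad (g x) w w := quad_nonneg hgx_pos w
    have h2 : (1-ε) * Real.sqrt (quad (g x) w w) ≤
        Real.sqrt (quad (g (γ t)) w w) := by
      have h3 : Real.sqrt ((1-ε) * quad (g x) w w) ≤ Real.sqrt (quad (g (γ t)) w w) :=
        Real.sqrt_le_sqrt h1
      have h4 : Real.sqrt ((1-ε) * quad (g x) w w)
          = Real.sqrt (1-ε) * Real.sqrt (quad (g x) w w) :=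
        Real.sqrt_mul (by linarith) _
      have h5 : (1-ε) ≤ Real.sqrt (1-ε) := by
        nlinarith [Real.sq_sqrt (show (0:ℝ) ≤ 1-ε by linarith),
          Real.sqrt_nonneg (1-ε), Real.sqrt_le_sqrt (show (1-ε) ≤ 1 by linarith),
          Real.sqrt_one]
      nlinarith [Real.sqrt_nonneg (quad (g x) w w)]
    have hCS : quad (g x) u w ≤ Nu * Real.sqrt (quad (g x) w w) :=
      quad_CS hgx_pos hgx_symm u w
    have h6 : quad (g x) u w / Nu ≤ Real.sqrt (quad (g x) w w) := by
      rw [div_le_iff₀ hNupos]; linarith [hCS]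
    calc (1-ε) / Nu * quad (g x) u w = (1-ε) * (quad (g x) u w / Nu) := by ring
      _ ≤ (1-ε) * Real.sqrt (quad (g x) w w) :=
          mul_le_mul_of_nonneg_left h6 (by linarith)
      _ ≤ Real.sqrt (quad (g (γ t)) w w) := h2
  -- FTC
  have hFTC : ∫ t in (0:ℝ)..T, quad (g x) u (dv γ t) = quad (g x) u u := by
    have hder : ∀ t ∈ uIcc (0:ℝ) T, HasDerivAt (fun s => quad (g x) u (γ s))
        (quad (g x) u (dv γ t)) t := by
      intro t _
      have : HasDerivAt (fun s => ∑ j, ∑ k, g x j k * u j * γ s k)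
          (∑ j, ∑ k, g x j k * u j * dv γ t k) t := by
        apply HasDerivAt.fun_sum; intro j _
        apply HasDerivAt.fun_sum; intro k _
        exact (hasDerivAt_coord hγ t k).const_mul _
      exact this
    have hint : IntervalIntegrable (fun t => quad (g x) u (dv γ t)) MeasureTheory.volume 0 T :=
      (continuous_quad_dv hγ).intervalIntegrable _ _
    rw [intervalIntegral.integral_eq_sub_of_hasDerivAt hder hint]
    rw [← quad_sub_right, ← hu]
  -- integral comparison
  have hint1 : IntervalIntegrable (fun t => (1-ε) / Nu * quad (g x) u (dv γ t))
      MeasureTheory.volume 0 T :=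
    (continuous_const.mul (continuous_quad_dv hγ)).intervalIntegrable _ _
  have hint2 : IntervalIntegrable
      (fun t => Real.sqrt (quad (g (γ t)) (dv γ t) (dv γ t))) MeasureTheory.volume 0 T := by
    apply ContinuousOn.intervalIntegrable
    apply integrand_contOn hg hγ
    intro t ht
    rw [uIcc_of_le hT0] at ht
    exact hball (hγball t ht)
  have hmono := intervalIntegral.integral_mono_on hT0 hint1 hint2 hpoint
  have heq : ∫ t in (0:ℝ)..T, (1-ε) / Nu * quad (g x) u (dv γ t)
      = (1-ε) / Nu * quad (g x) u u := by
    rw [intervalIntegral.integral_const_mul, hFTC]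
  rw [heq] at hmono
  have hfinal : (1-ε) / Nu * quad (g x) u u = (1-ε) * Nu := by
    have : quad (g x) u u = Nu * Nu := by
      rw [hNu, Real.mul_self_sqrt hQu.le]
    rw [this]; field_simp
  rw [hfinal] at hmono
  exact hmono

lemma dist_lower {U : Set (Vec n)} (hU : IsOpen U) {g : Vec n → Matrix (Fin n) (Fin n) ℝ}
    (hg : ∀ j k, ContinuousOn (fun x => g x j k) U)
    (hsymm : ∀ x ∈ U, (g x).IsSymm) (hpos : ∀ x ∈ U, (g x).PosDef)
    (hn : 0 < n) {x : Vec n} (hx : x ∈ U) {ε : ℝ} (hε0 : 0 < ε) (hε1 : ε < 1) :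
    ∃ r > 0, ∃ m > 0, Metric.closedBall x r ⊆ U ∧
      ∀ y ∈ Metric.closedBall x r, ∀ γ : ℝ → Vec n, ContDiff ℝ (⊤ : ℕ∞) γ → γ 0 = x →
        γ 1 = y → (∀ t ∈ Icc (0:ℝ) 1, γ t ∈ U) →
        (1-ε) * min (Real.sqrt (quad (g x) (y - x) (y - x))) m ≤ pathLength g γ := by
  obtain ⟨μ, hμ, hμ2⟩ := exists_mu hn (hpos x hx)
  obtain ⟨r, hr, hrU, hcomp'⟩ := quad_lower_near hU hg hx (show (0:ℝ) < ε*μ by positivity)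
  have hcomp : ∀ z ∈ Metric.closedBall x r, ∀ w : Vec n,
      (1-ε) * quad (g x) w w ≤ quad (g z) w w := by
    intro z hz w
    have h1 := hcomp' z hz w
    have h2 := hμ2 w
    nlinarith [norm_nonneg w, sq_nonneg (‖w‖)]
  refine ⟨r, hr, Real.sqrt μ * r, by positivity, hrU, ?_⟩
  intro y hy γ hγ h0 h1 hin
  have hfc : ContinuousOn (fun t => Real.sqrt (quad (g (γ t)) (dv γ t) (dv γ t)))
      (Icc (0:ℝ) 1) := integrand_contOn hg hγ hin
  by_cases hall : ∀ t ∈ Icc (0:ℝ) 1, γ t ∈ Metric.closedBall x r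
  · have hest := segment_est hg (hpos x hx) (hsymm x hx) hε0.le hε1.le hrU hcomp hγ
      zero_le_one le_rfl hall
    rw [h1, h0] at hest
    rw [pathLength_eq]
    calc (1-ε) * min (Real.sqrt (quad (g x) (y - x) (y - x))) (Real.sqrt μ * r)
        ≤ (1-ε) * Real.sqrt (quad (g x) (y - x) (y - x)) :=
          mul_le_mul_of_nonneg_left (min_le_left _ _) (by linarith)
      _ ≤ _ := hest
  · push_neg at hall
    obtain ⟨t₀, ht₀, ht₀r⟩ := hall
    set S : Set ℝ := Icc (0:ℝ) 1 ∩ {t | r ≤ dist (γ t) x} with hS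
    have hdistc : Continuous fun t => dist (γ t) x :=
      (hγ.continuous.dist continuous_const)
    have hSc : IsClosed S := isClosed_Icc.inter (isClosed_le continuous_const hdistc)
    have hSne : S.Nonempty := ⟨t₀, ht₀, le_of_lt (by
      simpa [Metric.mem_closedBall, not_le] using ht₀r)⟩
    have hSbdd : BddBelow S := ⟨0, fun t ht => ht.1.1⟩
    set T : ℝ := sInf S with hT
    have hTS : T ∈ S := hSc.csInf_mem hSne hSbdd
    have hT0 : 0 ≤ T := hTS.1.1
    have hT1 : T ≤ 1 := hTS.1.2
    have hTpos : 0 < T := by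
      rcases hT0.lt_or_eq with h | h
      · exact h
      · exfalso
        have h2 := hTS.2
        rw [← h] at h2
        simp only [Set.mem_setOf_eq, h0, dist_self] at h2
        linarith
    have hless : ∀ t, 0 ≤ t → t < T → dist (γ t) x < r := by
      intro t h0t htT
      by_contra hcon
      push_neg at hcon
      exact absurd (csInf_le hSbdd ⟨⟨h0t, htT.le.trans hT1⟩, hcon⟩) (not_le.2 htT)
    have hTle : dist (γ T) x ≤ r := by
      have htend : Tendsto (fun t => dist (γ t) x) (nhdsWithin T (Iio T))
          (nhds (dist (γ T) x)) := (hdistc.tendsto T).mono_left nhdsWithin_le_nhds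
      refine le_of_tendsto htend ?_
      filter_upwards [Ioo_mem_nhdsLT hTpos]
        with t ht
      exact (hless t ht.1.le ht.2).le
    have hγball : ∀ t ∈ Icc 0 T, γ t ∈ Metric.closedBall x r := by
      intro t ⟨h0t, htT⟩
      rcases htT.lt_or_eq with h | h
      · exact Metric.mem_closedBall.2 (hless t h0t h).le
      · rw [h]; exact Metric.mem_closedBall.2 hTle
    have hest := segment_est hg (hpos x hx) (hsymm x hx) hε0.le hε1.le hrU hcomp hγ
      hT0 hT1 hγball
    have hNuT : Real.sqrt μ * r ≤ Real.sqrt (quad (g x) (γ T - γ 0) (γ T - γ 0)) := by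
      have hdT : dist (γ T) x = r := le_antisymm hTle hTS.2
      have hnorm : ‖γ T - γ 0‖ = r := by
        rw [h0, ← dist_eq_norm]; exact hdT
      have h3 := hμ2 (γ T - γ 0)
      rw [hnorm] at h3
      have h4 : Real.sqrt (μ * r^2) ≤ Real.sqrt (quad (g x) (γ T - γ 0) (γ T - γ 0)) :=
        Real.sqrt_le_sqrt h3
      calc Real.sqrt μ * r = Real.sqrt (μ * r^2) := by
            rw [Real.sqrt_mul hμ.le, Real.sqrt_sq hr.le]
        _ ≤ _ := h4
    have hsplit : ∫ t in (0:ℝ)..T, Real.sqrt (quad (g (γ t)) (dv γ t) (dv γ t))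
        ≤ pathLength g γ := by
      rw [pathLength_eq]
      have hi1 : IntervalIntegrable
          (fun t => Real.sqrt (quad (g (γ t)) (dv γ t) (dv γ t)))
          MeasureTheory.volume 0 T := by
        apply ContinuousOn.intervalIntegrable
        exact hfc.mono (by rw [uIcc_of_le hT0]; exact Icc_subset_Icc le_rfl hT1)
      have hi2 : IntervalIntegrable
          (fun t => Real.sqrt (quad (g (γ t)) (dv γ t) (dv γ t)))
          MeasureTheory.volume T 1 := by
        apply ContinuousOn.intervalIntegrable
        exact hfc.mono (by rw [uIcc_of_le hT1]; exact Icc_subset_Icc hT0 le_rfl)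
      rw [← intervalIntegral.integral_add_adjacent_intervals hi1 hi2]
      have : 0 ≤ ∫ t in T..(1:ℝ), Real.sqrt (quad (g (γ t)) (dv γ t) (dv γ t)) :=
        intervalIntegral.integral_nonneg hT1 (fun _ _ => Real.sqrt_nonneg _)
      linarith
    calc (1-ε) * min (Real.sqrt (quad (g x) (y - x) (y - x))) (Real.sqrt μ * r)
        ≤ (1-ε) * (Real.sqrt μ * r) :=
          mul_le_mul_of_nonneg_left (min_le_right _ _) (by linarith)
      _ ≤ (1-ε) * Real.sqrt (quad (g x) (γ T - γ 0) (γ T - γ 0)) :=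
          mul_le_mul_of_nonneg_left hNuT (by linarith)
      _ ≤ _ := hest.trans hsplit

lemma dv_contOn {c : ℝ → Vec n} {s : Set ℝ} (hs : IsOpen s)
    (hc : ContDiffOn ℝ (⊤ : ℕ∞) c s) (k : Fin n) :
    ContinuousOn (fun t => dv c t k) s :=
  ((ContinuousLinearMap.proj (R := ℝ) (φ := fun _ : Fin n => ℝ) k).contDiff.comp_contDiffOn
    hc).continuousOn_deriv_of_isOpen hs (by norm_num)

lemma psi_contOn {U : Set (Vec n)} {g : Vec n → Matrix (Fin n) (Fin n) ℝ}
    (hg : ∀ j k, ContinuousOn (fun x => g x j k) U) {c : ℝ → Vec n} {s : Set ℝ}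
    (hs : IsOpen s) (hc : ContDiffOn ℝ (⊤ : ℕ∞) c s) (hcU : ∀ t ∈ s, c t ∈ U) :
    ContinuousOn (fun τ => Real.sqrt (quad (g (c τ)) (dv c τ) (dv c τ))) s := by
  apply Real.continuous_sqrt.comp_continuousOn
  unfold quad
  apply continuousOn_finset_sum; intro j _
  apply continuousOn_finset_sum; intro k _
  exact (((hg j k).comp hc.continuousOn hcU).mul (dv_contOn hs hc j)).mul (dv_contOn hs hc k)

lemma hasDerivAt_coord_on {c : ℝ → Vec n} {s : Set ℝ} (hs : IsOpen s)
    (hc : ContDiffOn ℝ (⊤ : ℕ∞) c s) {t : ℝ} (hts : t ∈ s) (k : Fin n) :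
    HasDerivAt (fun τ => c τ k) (dv c t k) t := by
  have h1 : ContDiffAt ℝ (⊤ : ℕ∞) (fun τ => c τ k) t :=
    ((ContinuousLinearMap.proj (R := ℝ) (φ := fun _ : Fin n => ℝ) k).contDiff.comp_contDiffOn
      hc).contDiffAt (hs.mem_nhds hts)
  exact (h1.differentiableAt (by norm_num)).hasDerivAt

lemma curve_upper {U : Set (Vec n)} (hU : IsOpen U) {g : Vec n → Matrix (Fin n) (Fin n) ℝ}
    (hg : ∀ j k, ContinuousOn (fun x => g x j k) U)
    {a : ℝ} (ha : 0 < a) {c : ℝ → Vec n} (hc : ContDiffOn ℝ (⊤ : ℕ∞) c (Ioo (-a) a))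
    (hcU : ∀ t ∈ Ioo (-a) a, c t ∈ U) {ε : ℝ} (hε : 0 < ε) :
    ∀ᶠ t in nhdsWithin (0:ℝ) (Ioi 0),
      (Nonempty {γ : ℝ → Vec n // ContDiff ℝ (⊤ : ℕ∞) γ ∧ γ 0 = c 0 ∧ γ 1 = c t ∧
        ∀ s ∈ Set.Icc (0:ℝ) 1, γ s ∈ U}) ∧
      riemDistIn g U (c 0) (c t) ≤
        t * (Real.sqrt (quad (g (c 0)) (dv c 0) (dv c 0)) + ε) := by
  set ψ : ℝ → ℝ := fun τ => Real.sqrt (quad (g (c τ)) (dv c τ) (dv c τ)) with hψdef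
  set L : ℝ := ψ 0 with hL
  have h0mem : (0:ℝ) ∈ Ioo (-a) a := ⟨by linarith, ha⟩
  have hψc : ContinuousAt ψ 0 :=
    (psi_contOn hg isOpen_Ioo hc hcU).continuousAt (isOpen_Ioo.mem_nhds h0mem)
  have hev : ∀ᶠ τ in nhds (0:ℝ), ψ τ < L + ε := by
    have : Set.Iio (L + ε) ∈ nhds (ψ 0) := Iio_mem_nhds (by rw [← hL]; linarith)
    exact hψc this
  obtain ⟨δ, hδ, hδball⟩ := Metric.eventually_nhds_iff_ball.1 hev
  set t₀ : ℝ := min (δ/2) (a/2) with ht₀def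
  have ht₀ : 0 < t₀ := lt_min (by linarith) (by linarith)
  filter_upwards [Ioo_mem_nhdsGT ht₀]
    with t ht
  obtain ⟨htpos, htlt⟩ := ht
  have htmem : ∀ s : ℝ, Real.smoothTransition s * t ∈ Ioo (-a) a := by
    intro s
    constructor
    · have := mul_nonneg (Real.smoothTransition.nonneg s) htpos.le
      linarith
    · have h1 : Real.smoothTransition s * t ≤ t :=
        mul_le_of_le_one_left htpos.le (Real.smoothTransition.le_one s)
      have : t < a := lt_of_lt_of_le htlt ((min_le_right _ _).trans (by linarith))
      linarith
  set γt : ℝ → Vec n := fun s => c (Real.smoothTransition s * t) with hγtdef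
  have hγc : ContDiff ℝ (⊤ : ℕ∞) γt := by
    rw [contDiff_iff_contDiffAt]
    intro s
    exact (hc.contDiffAt (isOpen_Ioo.mem_nhds (htmem s))).comp s
      ((Real.smoothTransition.contDiff.contDiffAt).mul contDiffAt_const)
  have hγ0 : γt 0 = c 0 := by
    simp [hγtdef, Real.smoothTransition.zero]
  have hγ1 : γt 1 = c t := by
    simp [hγtdef, Real.smoothTransition.one]
  have hγU : ∀ s ∈ Set.Icc (0:ℝ) 1, γt s ∈ U := fun s _ => hcU _ (htmem s)
  refine ⟨⟨⟨γt, hγc, hγ0, hγ1, hγU⟩⟩, ?_⟩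
  have hle : riemDistIn g U (c 0) (c t) ≤ pathLength g γt :=
    riemDistIn_le ⟨γt, hγc, hγ0, hγ1, hγU⟩
  -- compute the derivative of γt
  have hdv : ∀ s : ℝ, ∀ k : Fin n,
      dv γt s k = (deriv Real.smoothTransition s * t) * dv c (Real.smoothTransition s * t) k := by
    intro s k
    have houter : HasDerivAt (fun τ => c τ k)
        (dv c (Real.smoothTransition s * t) k) (Real.smoothTransition s * t) :=
      hasDerivAt_coord_on isOpen_Ioo hc (htmem s) k
    have hinner : HasDerivAt (fun s' => Real.smoothTransition s' * t)
        (deriv Real.smoothTransition s * t) s :=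
      (((Real.smoothTransition.contDiff (n := 1)).differentiable (by simp) s).hasDerivAt).mul_const t
    have hcomp := houter.comp s hinner
    have h2 : deriv (fun s' => c (Real.smoothTransition s' * t) k) s
        = dv c (Real.smoothTransition s * t) k * (deriv Real.smoothTransition s * t) := by
      exact hcomp.deriv
    have h3 : dv γt s k = deriv (fun s' => c (Real.smoothTransition s' * t) k) s := rfl
    rw [h3, h2]
    ring
  -- integrand bound
  have hbound : ∀ s ∈ Icc (0:ℝ) 1,
      Real.sqrt (quad (g (γt s)) (dv γt s) (dv γt s)) ≤
        deriv Real.smoothTransition s * (t * (L + ε)) := by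
    intro s _
    have hdve : dv γt s = (deriv Real.smoothTransition s * t) • dv c (Real.smoothTransition s * t) := by
      funext k; rw [hdv s k]; simp [Pi.smul_apply, smul_eq_mul]
    rw [hdve, quad_smul_left, quad_smul_right]
    rw [show (deriv Real.smoothTransition s * t) * ((deriv Real.smoothTransition s * t) *
        quad (g (γt s)) (dv c (Real.smoothTransition s * t)) (dv c (Real.smoothTransition s * t)))
      = (deriv Real.smoothTransition s * t)^2 *
        quad (g (γt s)) (dv c (Real.smoothTransition s * t)) (dv c (Real.smoothTransition s * t)) by ring]
    rw [Real.sqrt_mul (sq_nonneg _), Real.sqrt_sq_eq_abs]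
    have hd0 : 0 ≤ deriv Real.smoothTransition s * t :=
      mul_nonneg (deriv_smoothTransition_nonneg s) htpos.le
    rw [abs_of_nonneg hd0]
    have hψb : Real.sqrt (quad (g (γt s)) (dv c (Real.smoothTransition s * t))
        (dv c (Real.smoothTransition s * t))) < L + ε := by
      have : γt s = c (Real.smoothTransition s * t) := rfl
      rw [this]
      apply hδball
      rw [Metric.mem_ball, Real.dist_eq, sub_zero]
      have h1 : |Real.smoothTransition s * t| = Real.smoothTransition s * t :=
        abs_of_nonneg (mul_nonneg (Real.smoothTransition.nonneg s) htpos.le)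
      rw [h1]
      have h2 : Real.smoothTransition s * t ≤ t :=
        mul_le_of_le_one_left htpos.le (Real.smoothTransition.le_one s)
      have h3 : t < δ := lt_of_lt_of_le htlt ((min_le_left _ _).trans (by linarith))
      linarith
    have hψnn : 0 ≤ Real.sqrt (quad (g (γt s)) (dv c (Real.smoothTransition s * t))
        (dv c (Real.smoothTransition s * t))) := Real.sqrt_nonneg _
    calc deriv Real.smoothTransition s * t * Real.sqrt (quad (g (γt s))
          (dv c (Real.smoothTransition s * t)) (dv c (Real.smoothTransition s * t)))
        ≤ deriv Real.smoothTransition s * t * (L + ε) :=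
          mul_le_mul_of_nonneg_left hψb.le hd0
      _ = deriv Real.smoothTransition s * (t * (L + ε)) := by ring
  -- integrate
  have hint1 : IntervalIntegrable
      (fun s => Real.sqrt (quad (g (γt s)) (dv γt s) (dv γt s)))
      MeasureTheory.volume 0 1 := by
    apply ContinuousOn.intervalIntegrable
    rw [uIcc_of_le zero_le_one]
    exact integrand_contOn hg hγc hγU
  have hdφc : Continuous (deriv Real.smoothTransition) :=
    (Real.smoothTransition.contDiff (n := 1)).continuous_deriv le_rfl
  have hint2 : IntervalIntegrable
      (fun s => deriv Real.smoothTransition s * (t * (L + ε)))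
      MeasureTheory.volume 0 1 :=
    (hdφc.mul continuous_const).intervalIntegrable _ _
  have hmono := intervalIntegral.integral_mono_on zero_le_one hint1 hint2 hbound
  have hFTC : ∫ s in (0:ℝ)..1, deriv Real.smoothTransition s = 1 := by
    rw [intervalIntegral.integral_deriv_eq_sub
      (fun s _ => (Real.smoothTransition.contDiff (n := 1)).differentiable (by simp) s)
      (hdφc.intervalIntegrable _ _)]
    rw [Real.smoothTransition.one, Real.smoothTransition.zero]
    norm_num
  have hval : ∫ s in (0:ℝ)..1, deriv Real.smoothTransition s * (t * (L + ε))
      = t * (L + ε) := by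
    rw [intervalIntegral.integral_mul_const, hFTC, one_mul]
  rw [hval] at hmono
  rw [pathLength_eq] at hle
  exact hle.trans hmono

lemma sqrt_quad_smul (M : Matrix (Fin n) (Fin n) ℝ) (s : ℝ) (w : Vec n) :
    Real.sqrt (quad M (s • w) (s • w)) = |s| * Real.sqrt (quad M w w) := by
  rw [quad_smul_left, quad_smul_right, ← mul_assoc,
    show s * s = s^2 by ring, Real.sqrt_mul (sq_nonneg s), Real.sqrt_sq_eq_abs]

lemma curve_ratio {U : Set (Vec n)} (hU : IsOpen U) {g : Vec n → Matrix (Fin n) (Fin n) ℝ}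
    (hg : ∀ j k, ContinuousOn (fun x => g x j k) U)
    (hsymm : ∀ x ∈ U, (g x).IsSymm) (hpos : ∀ x ∈ U, (g x).PosDef) (hn : 0 < n)
    {a : ℝ} (ha : 0 < a) {c : ℝ → Vec n} (hc : ContDiffOn ℝ (⊤ : ℕ∞) c (Ioo (-a) a))
    (hcU : ∀ t ∈ Ioo (-a) a, c t ∈ U) :
    Tendsto (fun t => riemDistIn g U (c 0) (c t) / t) (nhdsWithin 0 (Ioi 0))
      (nhds (Real.sqrt (quad (g (c 0)) (dv c 0) (dv c 0)))) := by
  have h0mem : (0:ℝ) ∈ Ioo (-a) a := ⟨by linarith, ha⟩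
  have hxU : c 0 ∈ U := hcU 0 h0mem
  set x : Vec n := c 0 with hx
  set L : ℝ := Real.sqrt (quad (g x) (dv c 0) (dv c 0)) with hLdef
  have hL0 : 0 ≤ L := Real.sqrt_nonneg _
  set N : Vec n → ℝ := fun w => Real.sqrt (quad (g x) w w) with hNdef
  have hNcont : Continuous N := Real.continuous_sqrt.comp (quad_continuous _)
  -- slope convergence
  have hcd : DifferentiableAt ℝ c 0 :=
    (hc.contDiffAt (isOpen_Ioo.mem_nhds h0mem)).differentiableAt (by norm_num)
  have hderiv0 : deriv c 0 = dv c 0 := by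
    funext k
    have h1 : HasDerivAt (fun s => c s k) ((deriv c 0) k) 0 :=
      ((ContinuousLinearMap.proj (R := ℝ) (φ := fun _ : Fin n => ℝ)
        k).hasFDerivAt).comp_hasDerivAt 0 hcd.hasDerivAt
    exact (h1.unique (hasDerivAt_coord_on isOpen_Ioo hc h0mem k))
  have hslope : Tendsto (fun t => t⁻¹ • (c t - c 0)) (nhdsWithin 0 (Ioi 0)) (nhds (dv c 0)) := by
    have h2 := hasDerivAt_iff_tendsto_slope.1 hcd.hasDerivAt
    rw [hderiv0] at h2
    have h3 : Tendsto (slope c 0) (nhdsWithin 0 (Ioi 0)) (nhds (dv c 0)) :=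
      h2.mono_left (nhdsWithin_mono _ (fun t ht => ne_of_gt ht))
    refine h3.congr (fun t => ?_)
    rw [slope_def_module, sub_zero]
  have hq : Tendsto (fun t => N (t⁻¹ • (c t - x))) (nhdsWithin 0 (Ioi 0)) (nhds L) :=
    (hNcont.tendsto _).comp hslope
  rw [Metric.tendsto_nhds]
  intro δ hδ
  set ε : ℝ := min (δ / (2*(L+2))) (1/2) with hεdef
  have hε0 : 0 < ε := lt_min (by positivity) (by norm_num)
  have hε1 : ε < 1 := lt_of_le_of_lt (min_le_right _ _) (by norm_num)
  have hεδ : ε * (2*(L+2)) ≤ δ := by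
    have := min_le_left (δ / (2*(L+2))) (1/2)
    rw [hεdef]
    calc min (δ / (2*(L+2))) (1/2) * (2*(L+2)) ≤ (δ / (2*(L+2))) * (2*(L+2)) :=
        mul_le_mul_of_nonneg_right this (by positivity)
      _ = δ := by field_simp
  obtain ⟨r, hr, m, hm, hrU, hlow⟩ :=
    dist_lower hU hg hsymm hpos hn hxU hε0 hε1
  have E1 := curve_upper hU hg ha hc hcU hε0
  have E2 : ∀ᶠ t in nhdsWithin (0:ℝ) (Ioi 0), c t ∈ Metric.closedBall x r := by
    have hcc : ContinuousAt c 0 := hcd.continuousAt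
    have : Metric.closedBall x r ∈ nhds x := Metric.closedBall_mem_nhds x hr
    exact eventually_nhdsWithin_of_eventually_nhds (hcc this)
  have E3 : ∀ᶠ t in nhdsWithin (0:ℝ) (Ioi 0),
      N (t⁻¹ • (c t - x)) ∈ Ioo (L - ε) (L + 1) :=
    hq (Ioo_mem_nhds (by linarith) (by linarith))
  have E4 : ∀ᶠ t in nhdsWithin (0:ℝ) (Ioi 0), t < m / (L + 1) := by
    filter_upwards [Ioo_mem_nhdsGT
      (show (0:ℝ) < m / (L+1) by positivity)] with t ht
    exact ht.2
  filter_upwards [E1, E2, E3, E4, self_mem_nhdsWithin] with t h1 h2 h3 h4 h5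
  have htpos : 0 < t := h5
  set d : ℝ := riemDistIn g U x (c t) with hd
  -- upper bound
  have hup : d / t ≤ L + ε := by
    rw [div_le_iff₀ htpos]
    calc d ≤ t * (L + ε) := h1.2
      _ = (L + ε) * t := mul_comm _ _
  -- lower bound
  have hlb : (1 - ε) * min (N (c t - x)) m ≤ d := by
    haveI : Nonempty {γ : ℝ → Vec n // ContDiff ℝ (⊤ : ℕ∞) γ ∧ γ 0 = x ∧ γ 1 = c t ∧
        ∀ s ∈ Set.Icc (0:ℝ) 1, γ s ∈ U} := h1.1
    apply le_ciInf
    intro γsub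
    obtain ⟨γ, hγ, hγ0, hγ1, hγU⟩ := γsub
    exact hlow (c t) h2 γ hγ hγ0 hγ1 hγU
  have hqt : N (c t - x) / t = N (t⁻¹ • (c t - x)) := by
    rw [hNdef]
    simp only
    rw [sqrt_quad_smul, abs_of_pos (inv_pos.2 htpos)]
    rw [div_eq_inv_mul]
  have hmt : L + 1 < m / t := by
    rw [lt_div_iff₀ htpos]
    have h6 : t * (L + 1) < m := (lt_div_iff₀ (by positivity : (0:ℝ) < L + 1)).1 h4
    linarith [h6]
  have hmin : min (N (c t - x)) m / t = N (c t - x) / t := by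
    rw [← min_div_div_right htpos.le, min_eq_left]
    rw [hqt]
    linarith [h3.2, hmt]
  have hlow2 : (1 - ε) * (N (t⁻¹ • (c t - x))) ≤ d / t := by
    have h7 : (1 - ε) * min (N (c t - x)) m / t ≤ d / t :=
      div_le_div_of_nonneg_right hlb htpos.le
    calc (1 - ε) * (N (t⁻¹ • (c t - x))) = (1 - ε) * (N (c t - x) / t) := by rw [hqt]
      _ = (1 - ε) * (min (N (c t - x)) m / t) := by rw [hmin]
      _ = (1 - ε) * min (N (c t - x)) m / t := by ring
      _ ≤ d / t := h7
  -- conclude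
  rw [Real.dist_eq, abs_sub_lt_iff]
  constructor
  · have hεδ' : ε < δ := by nlinarith [hεδ, hε0, hL0]
    linarith [hup]
  · have h8 : (1 - ε) * (L - ε) ≤ (1 - ε) * (N (t⁻¹ • (c t - x))) :=
      mul_le_mul_of_nonneg_left h3.1.le (by linarith)
    have h9 : (1 - ε) * (L - ε) ≤ d / t := h8.trans hlow2
    nlinarith [hεδ, hε0, hL0, h9]

lemma quad_sub_left (M : Matrix (Fin n) (Fin n) ℝ) (u v w : Vec n) :
    quad M (u - v) w = quad M u w - quad M v w := by
  simp only [quad, Pi.sub_apply, sub_mul, mul_sub, Finset.sum_sub_distrib]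

lemma quad_polar {M : Matrix (Fin n) (Fin n) ℝ} (hM : M.IsSymm) (v w : Vec n) :
    quad M v w = (quad M (v+w) (v+w) - quad M (v-w) (v-w)) / 4 := by
  rw [quad_add_left, quad_add_right, quad_add_right, quad_sub_left, quad_sub_right,
    quad_sub_right, quad_symm hM w v]
  ring

lemma div_pow_ratio (a b t : ℝ) (ht : t ≠ 0) {m : ℕ} (hm : m ≠ 0) :
    (a/t)^m / (b/t)^m = a^m / b^m := by
  rcases eq_or_ne b 0 with rfl | hb
  · simp [zero_pow hm]
  · field_simp
    ring

end SGC

open SGC Filter Set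

/-- a diffeomorphism intertwining the scaled Green's functions
`H_i = G_i/(P_i ⊗ P_i)`, where the `G_i` have the standard Green's function diagonal
asymptotics `G_i(x,y) ∼ c(n) d_i(x,y)^{2-n}` with `c(n) = 1/((n-2)ω_n)`, is conformal with
conformal factor `c(x) = (P₂(J(x))/P₁(x))^{4/(n-2)}`. -/
theorem scaled_greens_conjugation_implies_conformal
    (n : ℕ) (hn : 3 ≤ n)
    (U₁ U₂ : Set (Vec n)) (hU₁ : IsOpen U₁) (hU₂ : IsOpen U₂)
    (g₁ g₂ : Vec n → Matrix (Fin n) (Fin n) ℝ)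
    (hg₁ : ∀ j k, ContDiffOn ℝ (⊤ : ℕ∞) (fun x => g₁ x j k) U₁)
    (hg₂ : ∀ j k, ContDiffOn ℝ (⊤ : ℕ∞) (fun x => g₂ x j k) U₂)
    (hsymm₁ : ∀ x ∈ U₁, (g₁ x).IsSymm) (hpos₁ : ∀ x ∈ U₁, (g₁ x).PosDef)
    (hsymm₂ : ∀ x ∈ U₂, (g₂ x).IsSymm) (hpos₂ : ∀ x ∈ U₂, (g₂ x).PosDef)
    (J : Vec n → Vec n) (hJ : ContDiffOn ℝ (⊤ : ℕ∞) J U₁)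
    (hJbij : Set.BijOn J U₁ U₂)
    (K : Vec n → Vec n) (hK : ContDiffOn ℝ (⊤ : ℕ∞) K U₂)
    (hKJ : ∀ x ∈ U₁, K (J x) = x)
    (P₁ P₂ : Vec n → ℝ)
    (hP₁ : ContDiffOn ℝ (⊤ : ℕ∞) P₁ U₁) (hP₁pos : ∀ x ∈ U₁, 0 < P₁ x)
    (hP₂ : ContDiffOn ℝ (⊤ : ℕ∞) P₂ U₂) (hP₂pos : ∀ x ∈ U₂, 0 < P₂ x)
    (G₁ G₂ : Vec n → Vec n → ℝ)
    (hGas₁ : ∀ x ∈ U₁, Filter.Tendsto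
      (fun y => G₁ x y * riemDistIn g₁ U₁ x y ^ (n - 2))
      (nhdsWithin x (U₁ \ {x}))
      (nhds (1 / (((n:ℝ) - 2) * (2 * Real.pi ^ ((n:ℝ)/2) / Real.Gamma ((n:ℝ)/2))))))
    (hGas₂ : ∀ x ∈ U₂, Filter.Tendsto
      (fun y => G₂ x y * riemDistIn g₂ U₂ x y ^ (n - 2))
      (nhdsWithin x (U₂ \ {x}))
      (nhds (1 / (((n:ℝ) - 2) * (2 * Real.pi ^ ((n:ℝ)/2) / Real.Gamma ((n:ℝ)/2))))))
    (hH : ∀ x ∈ U₁, ∀ y ∈ U₁, x ≠ y →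
      G₁ x y / (P₁ x * P₁ y) = G₂ (J x) (J y) / (P₂ (J x) * P₂ (J y))) :
    ∀ x ∈ U₁, ∀ v w : Vec n,
      (∑ j, ∑ k, g₁ x j k * v j * w k)
        = (P₂ (J x) / P₁ x) ^ ((4:ℝ) / ((n:ℝ) - 2)) *
            ∑ j, ∑ k, g₂ (J x) j k * (fderiv ℝ J x v) j * (fderiv ℝ J x w) k := by
  
  intro x hx v w
  have hn0 : 0 < n := by omega
  have hmcast : ((n:ℝ) - 2) = ((n - 2 : ℕ) : ℝ) := by
    push_cast [Nat.cast_sub (by omega : 2 ≤ n)]; ring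
  have hmne : (n - 2 : ℕ) ≠ 0 := by omega
  set cst : ℝ := 1 / (((n:ℝ) - 2) * (2 * Real.pi ^ ((n:ℝ)/2) / Real.Gamma ((n:ℝ)/2))) with hcst
  have hcstpos : 0 < cst := by
    apply div_pos one_pos
    apply mul_pos
    · rw [hmcast]
      exact_mod_cast Nat.cast_pos.2 (show 0 < n - 2 by omega)
    · apply div_pos
      · have := Real.rpow_pos_of_pos Real.pi_pos ((n:ℝ)/2)
        linarith
      · exact Real.Gamma_pos_of_pos (by positivity)
  set DJ : Vec n →L[ℝ] Vec n := fderiv ℝ J x with hDJ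
  have hJxU₂ : J x ∈ U₂ := hJbij.1 hx
  have hJd : DifferentiableAt ℝ J x :=
    (hJ.contDiffAt (hU₁.mem_nhds hx)).differentiableAt (by norm_num)
  have hKd : DifferentiableAt ℝ K (J x) :=
    (hK.contDiffAt (hU₂.mem_nhds hJxU₂)).differentiableAt (by norm_num)
  have hDJinj : ∀ u : Vec n, DJ u = 0 → u = 0 := by
    intro u hu
    have hEq : (fun y => K (J y)) =ᶠ[nhds x] id := by
      filter_upwards [hU₁.mem_nhds hx] with z hz
      exact hKJ z hz
    have hfd : fderiv ℝ (fun y => K (J y)) x = ContinuousLinearMap.id ℝ (Vec n) := by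
      rw [hEq.fderiv_eq]; exact fderiv_id
    have hcomp : fderiv ℝ (fun y => K (J y)) x = (fderiv ℝ K (J x)).comp DJ := by
      rw [hDJ]
      exact fderiv_comp x hKd hJd
    have h2 : (fderiv ℝ K (J x)).comp DJ = ContinuousLinearMap.id ℝ (Vec n) := by
      rw [← hcomp, hfd]
    calc u = ((fderiv ℝ K (J x)).comp DJ) u := by rw [h2]; rfl
      _ = fderiv ℝ K (J x) (DJ u) := rfl
      _ = 0 := by rw [hu, map_zero]
  -- the key quadratic identity
  have key : ∀ u : Vec n, quad (g₁ x) u u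
      = (P₂ (J x) / P₁ x) ^ ((4:ℝ)/((n:ℝ)-2)) * quad (g₂ (J x)) (DJ u) (DJ u) := by
    intro u
    rcases eq_or_ne u 0 with rfl | hu
    · rw [show quad (g₁ x) (0:Vec n) 0 = 0 by simp [quad], map_zero,
        show quad (g₂ (J x)) (0:Vec n) 0 = 0 by simp [quad], mul_zero]
    -- radius for the ray
    obtain ⟨a, ha, haU⟩ : ∃ a : ℝ, 0 < a ∧ ∀ t ∈ Ioo (-a) a, x + t • u ∈ U₁ := by
      have hco : Continuous (fun t : ℝ => x + t • u) :=
        continuous_const.add (continuous_id.smul continuous_const)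
      have hpre : (fun t : ℝ => x + t • u) ⁻¹' U₁ ∈ nhds (0:ℝ) :=
        hco.continuousAt (hU₁.mem_nhds (by simpa using hx))
      obtain ⟨a, ha, hball⟩ := Metric.mem_nhds_iff.1 hpre
      refine ⟨a, ha, fun t ht => ?_⟩
      have htb : t ∈ Metric.ball (0:ℝ) a := by
        rw [Metric.mem_ball, Real.dist_eq, sub_zero, abs_lt]
        exact ⟨ht.1, ht.2⟩
      simpa using hball htb
    set c₁ : ℝ → Vec n := fun t => x + t • u with hc₁def
    have hc₁ : ContDiffOn ℝ (⊤ : ℕ∞) c₁ (Ioo (-a) a) :=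
      (contDiff_const.add (contDiff_id.smul contDiff_const)).contDiffOn
    have hc₁0 : c₁ 0 = x := by simp [hc₁def]
    have hc₁der : HasDerivAt c₁ u 0 := by
      have h1 : HasDerivAt (fun t : ℝ => t • u) ((1:ℝ) • u) 0 :=
        (hasDerivAt_id (0:ℝ)).smul_const u
      have h2 := h1.const_add x
      rw [one_smul] at h2; exact h2
    have hdvc₁ : dv c₁ 0 = u := by
      funext k
      have h1 : HasDerivAt (fun s => c₁ s k) (u k) 0 :=
        ((ContinuousLinearMap.proj (R := ℝ) (φ := fun _ : Fin n => ℝ)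
          k).hasFDerivAt).comp_hasDerivAt 0 hc₁der
      exact h1.deriv
    set c₂ : ℝ → Vec n := fun t => J (c₁ t) with hc₂def
    have hc₂ : ContDiffOn ℝ (⊤ : ℕ∞) c₂ (Ioo (-a) a) :=
      hJ.comp hc₁ (fun t ht => haU t ht)
    have hc₂U : ∀ t ∈ Ioo (-a) a, c₂ t ∈ U₂ := fun t ht => hJbij.1 (haU t ht)
    have hc₂0 : c₂ 0 = J x := by rw [hc₂def]; simp [hc₁0]
    have hc₂der : HasDerivAt c₂ (DJ u) 0 := by
      have hJf : HasFDerivAt J DJ (c₁ 0) := by rw [hc₁0]; exact hJd.hasFDerivAt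
      exact hJf.comp_hasDerivAt 0 hc₁der
    have hdvc₂ : dv c₂ 0 = DJ u := by
      funext k
      have h1 : HasDerivAt (fun s => c₂ s k) ((DJ u) k) 0 :=
        ((ContinuousLinearMap.proj (R := ℝ) (φ := fun _ : Fin n => ℝ)
          k).hasFDerivAt).comp_hasDerivAt 0 hc₂der
      exact h1.deriv
    -- the two distance-ratio limits
    have T₁ : Tendsto (fun t => riemDistIn g₁ U₁ x (c₁ t) / t) (nhdsWithin 0 (Ioi 0))
        (nhds (Real.sqrt (quad (g₁ x) u u))) := by
      have := curve_ratio hU₁ (fun j k => (hg₁ j k).continuousOn) hsymm₁ hpos₁ hn0 ha hc₁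
        (fun t ht => haU t ht)
      rwa [hc₁0, hdvc₁] at this
    have T₂ : Tendsto (fun t => riemDistIn g₂ U₂ (J x) (c₂ t) / t) (nhdsWithin 0 (Ioi 0))
        (nhds (Real.sqrt (quad (g₂ (J x)) (DJ u) (DJ u)))) := by
      have := curve_ratio hU₂ (fun j k => (hg₂ j k).continuousOn) hsymm₂ hpos₂ hn0 ha hc₂ hc₂U
      rwa [hc₂0, hdvc₂] at this
    set N₁ : ℝ := Real.sqrt (quad (g₁ x) u u) with hN₁
    set N₂ : ℝ := Real.sqrt (quad (g₂ (J x)) (DJ u) (DJ u)) with hN₂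
    have hDJu : DJ u ≠ 0 := fun h => hu (hDJinj u h)
    have hN₁pos : 0 < N₁ := Real.sqrt_pos.2 (quad_pos (hpos₁ x hx) hu)
    have hN₂pos : 0 < N₂ := Real.sqrt_pos.2 (quad_pos (hpos₂ _ hJxU₂) hDJu)
    -- tendsto into punctured neighbourhoods
    have hc₁tendsto : Tendsto c₁ (nhdsWithin 0 (Ioi 0)) (nhds x) := by
      have hco : Continuous c₁ :=
        continuous_const.add (continuous_id.smul continuous_const)
      have := hco.tendsto 0
      rw [hc₁0] at this
      exact this.mono_left nhdsWithin_le_nhds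
    have hmemall : ∀ᶠ t in nhdsWithin (0:ℝ) (Ioi 0), t ∈ Ioo (0:ℝ) a :=
      Ioo_mem_nhdsGT ha
    have hc₁ne : ∀ t ∈ Ioo (0:ℝ) a, c₁ t ≠ x := by
      intro t ht hcon
      rw [hc₁def] at hcon
      have : t • u = 0 := by
        have := congrArg (fun z => z - x) hcon
        simpa using this
      rcases smul_eq_zero.1 this with h | h
      · exact ht.1.ne' h
      · exact hu h
    have hIoosub : ∀ t ∈ Ioo (0:ℝ) a, t ∈ Ioo (-a) a := fun t ht => ⟨by linarith [ht.1], ht.2⟩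
    have Tray : Tendsto c₁ (nhdsWithin 0 (Ioi 0)) (nhdsWithin x (U₁ \ {x})) := by
      rw [tendsto_nhdsWithin_iff]
      refine ⟨hc₁tendsto, ?_⟩
      filter_upwards [hmemall] with t ht
      exact ⟨haU t (hIoosub t ht), fun hmem => hc₁ne t ht (by simpa using hmem)⟩
    have TrayJ : Tendsto c₂ (nhdsWithin 0 (Ioi 0)) (nhdsWithin (J x) (U₂ \ {J x})) := by
      rw [tendsto_nhdsWithin_iff]
      constructor
      · have hJc : ContinuousAt J x := hJd.continuousAt
        have := hJc.tendsto.comp hc₁tendsto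
        exact this
      · filter_upwards [hmemall] with t ht
        refine ⟨hc₂U t (hIoosub t ht), fun hmem => ?_⟩
        have : J (c₁ t) = J x := by simpa using hmem
        exact hc₁ne t ht (hJbij.2.1 (haU t (hIoosub t ht)) hx this)
    have A₁ : Tendsto (fun t => G₁ x (c₁ t) * riemDistIn g₁ U₁ x (c₁ t) ^ (n - 2))
        (nhdsWithin 0 (Ioi 0)) (nhds cst) := (hGas₁ x hx).comp Tray
    have A₂ : Tendsto (fun t => G₂ (J x) (c₂ t) * riemDistIn g₂ U₂ (J x) (c₂ t) ^ (n - 2))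
        (nhdsWithin 0 (Ioi 0)) (nhds cst) := (hGas₂ (J x) hJxU₂).comp TrayJ
    -- continuity of the P's along the ray
    have TP₁ : Tendsto (fun t => P₁ (c₁ t)) (nhdsWithin 0 (Ioi 0)) (nhds (P₁ x)) :=
      ((hP₁.continuousOn.continuousAt (hU₁.mem_nhds hx)).tendsto).comp hc₁tendsto
    have TP₂ : Tendsto (fun t => P₂ (c₂ t)) (nhdsWithin 0 (Ioi 0)) (nhds (P₂ (J x))) := by
      have hJc : ContinuousAt J x := hJd.continuousAt
      have h2 : Tendsto c₂ (nhdsWithin 0 (Ioi 0)) (nhds (J x)) := hJc.tendsto.comp hc₁tendsto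
      exact ((hP₂.continuousOn.continuousAt (hU₂.mem_nhds hJxU₂)).tendsto).comp h2
    -- the ratio
    set R : ℝ → ℝ := fun t => riemDistIn g₁ U₁ x (c₁ t) ^ (n-2) /
      riemDistIn g₂ U₂ (J x) (c₂ t) ^ (n-2) with hR
    have hB : Tendsto R (nhdsWithin 0 (Ioi 0)) (nhds ((N₁ / N₂)^(n-2))) := by
      have h1 : Tendsto (fun t => (riemDistIn g₁ U₁ x (c₁ t) / t) ^ (n-2) /
          (riemDistIn g₂ U₂ (J x) (c₂ t) / t) ^ (n-2)) (nhdsWithin 0 (Ioi 0))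
          (nhds (N₁^(n-2) / N₂^(n-2))) :=
        (T₁.pow _).div (T₂.pow _) (pow_ne_zero _ hN₂pos.ne')
      rw [div_pow]
      apply h1.congr'
      filter_upwards [self_mem_nhdsWithin] with t ht
      exact div_pow_ratio _ _ t (ne_of_gt ht) hmne
    have hP₁xne : P₁ x ≠ 0 := (hP₁pos x hx).ne'
    have hP₂xne : P₂ (J x) ≠ 0 := (hP₂pos _ hJxU₂).ne'
    have hC : Tendsto R (nhdsWithin 0 (Ioi 0))
        (nhds ((P₂ (J x) * P₂ (J x)) / (P₁ x * P₁ x))) := by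
      have h1 : Tendsto (fun t =>
          (G₁ x (c₁ t) * riemDistIn g₁ U₁ x (c₁ t) ^ (n-2)) /
            (G₂ (J x) (c₂ t) * riemDistIn g₂ U₂ (J x) (c₂ t) ^ (n-2)) *
          ((P₂ (J x) * P₂ (c₂ t)) / (P₁ x * P₁ (c₁ t))))
          (nhdsWithin 0 (Ioi 0))
          (nhds ((cst / cst) * ((P₂ (J x) * P₂ (J x)) / (P₁ x * P₁ x)))) := by
        exact (A₁.div A₂ hcstpos.ne').mul
          (((tendsto_const_nhds.mul TP₂)).div ((tendsto_const_nhds.mul TP₁))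
            (by exact mul_ne_zero hP₁xne hP₁xne))
      rw [div_self hcstpos.ne', one_mul] at h1
      apply h1.congr'
      filter_upwards [hmemall, A₂.eventually_ne hcstpos.ne'] with t ht hA₂ne
      have hyU : c₁ t ∈ U₁ := haU t (hIoosub t ht)
      have hyne : x ≠ c₁ t := fun h => hc₁ne t ht h.symm
      have hHt := hH x hx (c₁ t) hyU hyne
      have hP₁y : P₁ (c₁ t) ≠ 0 := (hP₁pos _ hyU).ne'
      have hP₂y : P₂ (c₂ t) ≠ 0 := (hP₂pos _ (hc₂U t (hIoosub t ht))).ne'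
      obtain ⟨hG₂ne, hd₂ne⟩ := mul_ne_zero_iff.1 hA₂ne
      have hG₁ : G₁ x (c₁ t) * (P₂ (J x) * P₂ (c₂ t)) =
          G₂ (J x) (c₂ t) * (P₁ x * P₁ (c₁ t)) := by
        rw [div_eq_div_iff (mul_ne_zero hP₁xne hP₁y) (mul_ne_zero hP₂xne hP₂y)] at hHt
        rw [hc₂def]
        linarith [hHt]
      rw [hR]
      field_simp
      linear_combination (riemDistIn g₁ U₁ x (c₁ t) ^ (n-2)) * hG₁
    have huniq : (N₁ / N₂)^(n-2) = (P₂ (J x) * P₂ (J x)) / (P₁ x * P₁ x) :=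
      tendsto_nhds_unique hB hC
    -- algebra: extract the conformal factor
    set ρ : ℝ := P₂ (J x) / P₁ x with hρ
    have hρpos : 0 < ρ := div_pos (hP₂pos _ hJxU₂) (hP₁pos x hx)
    have hρ2 : (P₂ (J x) * P₂ (J x)) / (P₁ x * P₁ x) = ρ^2 := by
      rw [hρ]; field_simp
    set s : ℝ := N₁ / N₂ with hs
    have hspos : 0 < s := div_pos hN₁pos hN₂pos
    have hsm : s ^ (n-2) = ρ^2 := by rw [← hρ2]; exact huniq
    have hmR : ((n - 2 : ℕ) : ℝ) ≠ 0 := by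
      exact_mod_cast hmne
    have hs_eq : s = (ρ^2) ^ (((n-2:ℕ):ℝ))⁻¹ := by
      rw [← hsm]
      rw [← Real.rpow_natCast s (n-2)]
      rw [← Real.rpow_mul hspos.le, mul_inv_cancel₀ hmR, Real.rpow_one]
    have hs2 : s^2 = ρ ^ ((4:ℝ)/((n:ℝ)-2)) := by
      rw [hs_eq]
      rw [← Real.rpow_natCast ((ρ^2) ^ (((n-2:ℕ):ℝ))⁻¹) 2]
      rw [← Real.rpow_mul (by positivity : (0:ℝ) ≤ ρ^2)]
      rw [← Real.rpow_natCast ρ 2]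
      rw [← Real.rpow_mul hρpos.le]
      rw [hmcast]
      congr 1
      push_cast
      field_simp
      norm_num
    have hN₁s : N₁ = s * N₂ := by rw [hs]; field_simp
    have hq₁ : quad (g₁ x) u u = N₁^2 := by
      rw [hN₁, Real.sq_sqrt (quad_nonneg (hpos₁ x hx) u)]
    have hq₂ : quad (g₂ (J x)) (DJ u) (DJ u) = N₂^2 := by
      rw [hN₂, Real.sq_sqrt (quad_nonneg (hpos₂ _ hJxU₂) _)]
    rw [hq₁, hq₂, hN₁s]
    rw [mul_pow, hs2]
  -- polarization
  have hfinal : quad (g₁ x) v w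
      = (P₂ (J x) / P₁ x) ^ ((4:ℝ)/((n:ℝ)-2)) * quad (g₂ (J x)) (DJ v) (DJ w) := by
    rw [quad_polar (hsymm₁ x hx) v w, key (v+w), key (v-w), map_add, map_sub,
      quad_polar (hsymm₂ (J x) hJxU₂) (DJ v) (DJ w)]
    ring
  exact hfinal
end
end
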